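/- arXiv:1302.0592 — 11 statements merged into one kernel-verified Lean document; each statement's English description precedes it below -/
import Mathlib

section
/- Let n and k be natural numbers with k ≤ n, and let u, v : ℝ → ℝ be n times continuously differentiable. Then for every x ∈ ℝ, ∑_{i=0}^{n} i^k · C(n,i) · u^{(i)}(x) · v^{(n−i)}(x) = ∑_{i=0}^{k} ( ∑_{s=0}^{i} (−1)^{s+i} · s^k / (s! · (i−s)!) ) · C(n,i) · i! · (u^{(i)}·v)^{(n−i)}(x), with the convention 0⁰ = 1. -/
open Finset Nat Function
open scoped fwdDiff



lemma fwdDiff_iter_zero_fun (m : ℕ) : (Δ_[(1:ℕ)])^[m] (fun _ : ℕ => (0:ℝ)) = fun _ => 0 := by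
  induction m with
  | zero => rfl
  | succ m ih =>
      rw [Function.iterate_succ_apply, show Δ_[(1:ℕ)] (fun _ : ℕ => (0:ℝ)) = fun _ => 0 by
        funext y; simp [fwdDiff], ih]

lemma fwdDiff_pow_vanish : ∀ k : ℕ, (Δ_[(1:ℕ)])^[k+1] (fun s : ℕ => (s:ℝ)^k) = fun _ => 0 := by
  intro k
  induction k using Nat.strong_induction_on with
  | _ k ih =>
    have hstep : Δ_[(1:ℕ)] (fun s : ℕ => (s:ℝ)^k)
        = ∑ j ∈ range k, (fun s : ℕ => (k.choose j : ℝ) * (s:ℝ)^j) := by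
      funext s
      have := add_pow (s:ℝ) 1 k
      simp only [one_pow, mul_one] at this
      simp only [fwdDiff, Finset.sum_apply]
      push_cast
      rw [this, Finset.sum_range_succ]
      simp [Nat.choose_self, mul_comm]
    rw [Function.iterate_succ_apply, hstep, fwdDiff_iter_finset_sum]
    funext y
    simp only [Finset.sum_apply]
    apply Finset.sum_eq_zero
    intro j hj
    have hj' : j < k := Finset.mem_range.mp hj
    have h1 : (fun s : ℕ => (k.choose j : ℝ) * (s:ℝ)^j)
        = (k.choose j : ℝ) • (fun s : ℕ => (s:ℝ)^j) := by funext s; simp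
    rw [h1, fwdDiff_iter_const_smul]
    have hk : k = (k - (j+1)) + (j+1) := by omega
    rw [hk, Function.iterate_add_apply, ih j hj', fwdDiff_iter_zero_fun]
    simp

lemma newton_sum (k m : ℕ) :
    ∑ i ∈ range (k+1), (m.choose i : ℝ) * ((Δ_[(1:ℕ)])^[i] (fun s : ℕ => (s:ℝ)^k) 0)
      = (m:ℝ)^k := by
  set F : ℕ → ℝ := fun s => (s:ℝ)^k with hF
  have hGN := shift_eq_sum_fwdDiff_iter (1:ℕ) F m 0
  have hL : F (0 + m • 1) = (m:ℝ)^k := by simp [hF]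
  rw [hL] at hGN
  have hzero : ∀ i, k < i → (Δ_[(1:ℕ)])^[i] F 0 = 0 := by
    intro i hi
    have : i = (i - (k+1)) + (k+1) := by omega
    rw [this, Function.iterate_add_apply, fwdDiff_pow_vanish, fwdDiff_iter_zero_fun]
  have h1 : ∑ i ∈ range (m+1), (m.choose i : ℝ) * (Δ_[(1:ℕ)])^[i] F 0
      = ∑ i ∈ range (max m k + 1), (m.choose i : ℝ) * (Δ_[(1:ℕ)])^[i] F 0 := by
    apply Finset.sum_subset (Finset.range_subset_range.mpr (by omega))
    intro i hi1 hi2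
    have : m < i := by
      simp only [Finset.mem_range] at hi1 hi2; omega
    simp [Nat.choose_eq_zero_of_lt this]
  have h2 : ∑ i ∈ range (k+1), (m.choose i : ℝ) * (Δ_[(1:ℕ)])^[i] F 0
      = ∑ i ∈ range (max m k + 1), (m.choose i : ℝ) * (Δ_[(1:ℕ)])^[i] F 0 := by
    apply Finset.sum_subset (Finset.range_subset_range.mpr (by omega))
    intro i hi1 hi2
    have hki : k < i := by
      simp only [Finset.mem_range] at hi1 hi2; omega
    rw [hzero i hki, mul_zero]
  rw [h2, ← h1, hGN]
  apply Finset.sum_congr rfl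
  intro i _
  simp [nsmul_eq_mul]

lemma coeff_sum (k m : ℕ) :
    ∑ i ∈ range (k+1),
        (∑ s ∈ range (i+1), (-1:ℝ)^(s+i) * (s:ℝ)^k / ((s.factorial : ℝ) * ((i-s).factorial : ℝ)))
          * (i.factorial : ℝ) * (m.choose i : ℝ)
      = (m:ℝ)^k := by
  rw [← newton_sum k m]
  apply Finset.sum_congr rfl
  intro i _
  have hd : (Δ_[(1:ℕ)])^[i] (fun s : ℕ => (s:ℝ)^k) 0
      = ∑ s ∈ range (i+1), (-1:ℝ)^(s+i) * (s:ℝ)^k / ((s.factorial : ℝ) * ((i-s).factorial : ℝ))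
          * (i.factorial : ℝ) := by
    rw [fwdDiff_iter_eq_sum_shift]
    apply Finset.sum_congr rfl
    intro s hs
    have hsi : s ≤ i := Nat.lt_succ_iff.mp (Finset.mem_range.mp hs)
    have h0 : (0 + s • 1 : ℕ) = s := by simp
    rw [h0, zsmul_eq_mul]
    push_cast
    rw [Nat.cast_choose ℝ hsi]
    have hpar : (-1:ℝ)^(s+i) = (-1:ℝ)^(i-s) := by
      have hh : s + i = (i - s) + 2*s := by omega
      rw [hh, pow_add, pow_mul]; simp
    rw [hpar]
    have hs0 : (s.factorial : ℝ) ≠ 0 := Nat.cast_ne_zero.mpr s.factorial_ne_zero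
    have his0 : ((i-s).factorial : ℝ) ≠ 0 := Nat.cast_ne_zero.mpr (i-s).factorial_ne_zero
    field_simp
  rw [hd, Finset.sum_mul]
  ring


lemma leibniz_iteratedDeriv : ∀ (m : ℕ) (f g : ℝ → ℝ), ContDiff ℝ m f → ContDiff ℝ m g →
    ∀ x : ℝ, iteratedDeriv m (fun y => f y * g y) x
      = ∑ j ∈ range (m+1),
          (m.choose j : ℝ) * iteratedDeriv j f x * iteratedDeriv (m-j) g x := by
  intro m
  induction m with
  | zero => intro f g _ _ x; simp
  | succ m ih =>
    intro f g hf hg x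
    have hf' : ContDiff ℝ m f := hf.of_succ
    have hg' : ContDiff ℝ m g := hg.of_succ
    have hfd : ∀ j, j ≤ m → Differentiable ℝ (iteratedDeriv j f) := fun j hj =>
      hf.differentiable_iteratedDeriv j (by exact_mod_cast Nat.lt_succ_of_le hj)
    have hgd : ∀ j, j ≤ m → Differentiable ℝ (iteratedDeriv j g) := fun j hj =>
      hg.differentiable_iteratedDeriv j (by exact_mod_cast Nat.lt_succ_of_le hj)
    have hrw : iteratedDeriv m (fun y => f y * g y)
        = fun y => ∑ j ∈ range (m+1),
            (m.choose j : ℝ) * iteratedDeriv j f y * iteratedDeriv (m-j) g y := by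
      funext y; exact ih f g hf' hg' y
    rw [iteratedDeriv_succ, hrw]
    rw [deriv_fun_sum (fun j hj => by
      have hj' : j ≤ m := Nat.lt_succ_iff.mp (Finset.mem_range.mp hj)
      exact (((hfd j hj').differentiableAt.const_mul _).mul
        (hgd (m-j) (Nat.sub_le m j)).differentiableAt))]
    have hterm : ∀ j ∈ range (m+1),
        deriv (fun y => (m.choose j : ℝ) * iteratedDeriv j f y * iteratedDeriv (m-j) g y) x
          = (m.choose j : ℝ) * (iteratedDeriv (j+1) f x * iteratedDeriv (m-j) g x
              + iteratedDeriv j f x * iteratedDeriv (m-j+1) g x) := by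
      intro j hj
      have hj' : j ≤ m := Nat.lt_succ_iff.mp (Finset.mem_range.mp hj)
      rw [show (fun y => (m.choose j : ℝ) * iteratedDeriv j f y * iteratedDeriv (m-j) g y)
          = fun y => (m.choose j : ℝ) * (iteratedDeriv j f y * iteratedDeriv (m-j) g y) by
        funext y; ring]
      rw [deriv_const_mul (d := fun y => iteratedDeriv j f y * iteratedDeriv (m-j) g y) _ (((hfd j hj').differentiableAt).mul
        ((hgd (m-j) (Nat.sub_le m j)).differentiableAt))]
      rw [deriv_fun_mul (hfd j hj').differentiableAt ((hgd (m-j) (Nat.sub_le m j)).differentiableAt)]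
      rw [← iteratedDeriv_succ, ← iteratedDeriv_succ]
    rw [Finset.sum_congr rfl hterm]
    -- now the Pascal recombination
    have key : ∀ j, j ≤ m → m - j + 1 = m + 1 - j := fun j hj => by omega
    set P : ℕ → ℝ := fun j => iteratedDeriv j f x * iteratedDeriv (m+1-j) g x with hP
    have hsplit : ∑ j ∈ range (m+1),
        (m.choose j : ℝ) * (iteratedDeriv (j+1) f x * iteratedDeriv (m-j) g x
          + iteratedDeriv j f x * iteratedDeriv (m-j+1) g x)
        = (∑ j ∈ range (m+1), (m.choose j : ℝ) * P (j+1))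
          + ∑ j ∈ range (m+1), (m.choose j : ℝ) * P j := by
      rw [← Finset.sum_add_distrib]
      apply Finset.sum_congr rfl
      intro j hj
      have hj' : j ≤ m := Nat.lt_succ_iff.mp (Finset.mem_range.mp hj)
      have h1 : m + 1 - (j+1) = m - j := by omega
      rw [hP]
      simp only [h1, key j hj']
      ring
    rw [hsplit]
    have htarget : ∑ j ∈ range (m+2),
        ((m+1).choose j : ℝ) * iteratedDeriv j f x * iteratedDeriv (m+1-j) g x
        = ∑ j ∈ range (m+2), ((m+1).choose j : ℝ) * P j := by
      apply Finset.sum_congr rfl; intro j _; rw [hP]; ring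
    rw [htarget]
    rw [Finset.sum_range_succ' (fun j => ((m+1).choose j : ℝ) * P j) (m+1)]
    have hch : ∀ j, ((m+1).choose (j+1) : ℝ) = (m.choose j : ℝ) + (m.choose (j+1) : ℝ) := by
      intro j; rw [Nat.choose_succ_succ']; push_cast; ring
    have h2 : ∑ j ∈ range (m+1), ((m+1).choose (j+1) : ℝ) * P (j+1)
        = (∑ j ∈ range (m+1), (m.choose j : ℝ) * P (j+1))
          + ∑ j ∈ range (m+1), (m.choose (j+1) : ℝ) * P (j+1) := by
      rw [← Finset.sum_add_distrib]
      apply Finset.sum_congr rfl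
      intro j _; rw [hch]; ring
    rw [h2]
    have h3 : (∑ j ∈ range (m+1), (m.choose (j+1) : ℝ) * P (j+1))
          + ((m+1).choose 0 : ℝ) * P 0
        = ∑ j ∈ range (m+1), (m.choose j : ℝ) * P j := by
      rw [show ((m+1).choose 0 : ℝ) * P 0 = (m.choose 0 : ℝ) * P 0 by simp]
      rw [← Finset.sum_range_succ' (fun j => (m.choose j : ℝ) * P j) (m+1)]
      rw [Finset.sum_range_succ (fun j => (m.choose j : ℝ) * P j) (m+1)]
      simp [Nat.choose_succ_self]
    rw [add_assoc, h3]

lemma itD_comp (i j : ℕ) (u : ℝ → ℝ) :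
    iteratedDeriv j (iteratedDeriv i u) = iteratedDeriv (i + j) u := by
  simp only [iteratedDeriv_eq_iterate]
  funext y
  rw [show i + j = j + i by omega, Function.iterate_add_apply]

lemma reindex_sum (n i : ℕ) (hi : i ≤ n) (F : ℕ → ℝ) :
    ∑ j ∈ range (n - i + 1), F (i + j) = ∑ m ∈ range (n+1), (if i ≤ m then F m else 0) := by
  rw [← Finset.sum_filter]
  have hset : (range (n+1)).filter (fun m => i ≤ m) = Finset.Ico i (n+1) := by
    ext m
    simp only [Finset.mem_filter, Finset.mem_range, Finset.mem_Ico]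
    omega
  rw [hset, Finset.sum_Ico_eq_sum_range, show n + 1 - i = n - i + 1 by omega]



/-- For naturals `k ≤ n` and `u, v : ℝ → ℝ` that are `n` times continuously differentiable,
`∑_{i=0}^{n} iᵏ · C(n,i) · u⁽ⁱ⁾(x) · v⁽ⁿ⁻ⁱ⁾(x)
  = ∑_{i=0}^{k} (∑_{s=0}^{i} (−1)^{s+i} sᵏ/(s!(i−s)!)) · C(n,i) · i! · (u⁽ⁱ⁾·v)⁽ⁿ⁻ⁱ⁾(x)`,
with the convention `0⁰ = 1`. -/
theorem statement2 (n k : ℕ) (hkn : k ≤ n) (u v : ℝ → ℝ)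
    (hu : ContDiff ℝ n u) (hv : ContDiff ℝ n v) (x : ℝ) :
    ∑ i ∈ Finset.range (n + 1),
        (i : ℝ) ^ k * (n.choose i : ℝ) * iteratedDeriv i u x * iteratedDeriv (n - i) v x
      = ∑ i ∈ Finset.range (k + 1),
          (∑ s ∈ Finset.range (i + 1),
              (-1 : ℝ) ^ (s + i) * (s : ℝ) ^ k
                / ((s.factorial : ℝ) * ((i - s).factorial : ℝ))) *
            (n.choose i : ℝ) * (i.factorial : ℝ) *
            iteratedDeriv (n - i) (fun y => iteratedDeriv i u y * v y) x := by
  have hterm : ∀ i ∈ Finset.range (k+1),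
      (∑ s ∈ Finset.range (i + 1),
          (-1 : ℝ) ^ (s + i) * (s : ℝ) ^ k
            / ((s.factorial : ℝ) * ((i - s).factorial : ℝ))) *
        (n.choose i : ℝ) * (i.factorial : ℝ) *
        iteratedDeriv (n - i) (fun y => iteratedDeriv i u y * v y) x
      = ∑ m ∈ range (n+1), (if i ≤ m then
          (∑ s ∈ Finset.range (i + 1),
            (-1 : ℝ) ^ (s + i) * (s : ℝ) ^ k
              / ((s.factorial : ℝ) * ((i - s).factorial : ℝ))) *
          (n.choose i : ℝ) * (i.factorial : ℝ) * ((n-i).choose (m-i) : ℝ) *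
          iteratedDeriv m u x * iteratedDeriv (n-m) v x else 0) := by
    intro i hi
    have hik : i ≤ k := Nat.lt_succ_iff.mp (Finset.mem_range.mp hi)
    have hin : i ≤ n := hik.trans hkn
    have hfi : ContDiff ℝ (n-i : ℕ) (iteratedDeriv i u) := by
      rw [iteratedDeriv_eq_iterate]
      apply ContDiff.iterate_deriv' (n-i) i
      rw [show (n-i)+i = n by omega]
      exact hu
    have hgi : ContDiff ℝ (n-i : ℕ) v := hv.of_le (by exact_mod_cast Nat.sub_le n i)
    rw [leibniz_iteratedDeriv (n-i) _ v hfi hgi x]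
    set c : ℝ := (∑ s ∈ Finset.range (i + 1),
        (-1 : ℝ) ^ (s + i) * (s : ℝ) ^ k
          / ((s.factorial : ℝ) * ((i - s).factorial : ℝ))) with hc
    set F : ℕ → ℝ := fun m => c * (n.choose i : ℝ) * (i.factorial : ℝ) *
        ((n-i).choose (m-i) : ℝ) * iteratedDeriv m u x * iteratedDeriv (n-m) v x with hFd
    rw [Finset.mul_sum]
    rw [Finset.sum_congr rfl (fun j hj => by
      show c * (n.choose i : ℝ) * (i.factorial : ℝ) *
          (((n-i).choose j : ℝ) * iteratedDeriv j (iteratedDeriv i u) x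
            * iteratedDeriv (n-i-j) v x) = F (i+j)
      rw [hFd]
      simp only [itD_comp i j u, Nat.add_sub_cancel_left, ← Nat.sub_sub]
      ring)]
    rw [reindex_sum n i hin F]
  rw [Finset.sum_congr rfl hterm, Finset.sum_comm]
  apply Finset.sum_congr rfl
  intro m hm
  have hmn : m ≤ n := Nat.lt_succ_iff.mp (Finset.mem_range.mp hm)
  have hper : ∀ i ∈ Finset.range (k+1),
      (if i ≤ m then
          (∑ s ∈ Finset.range (i + 1),
            (-1 : ℝ) ^ (s + i) * (s : ℝ) ^ k
              / ((s.factorial : ℝ) * ((i - s).factorial : ℝ))) *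
          (n.choose i : ℝ) * (i.factorial : ℝ) * ((n-i).choose (m-i) : ℝ) *
          iteratedDeriv m u x * iteratedDeriv (n-m) v x else 0)
      = (∑ s ∈ Finset.range (i + 1),
            (-1 : ℝ) ^ (s + i) * (s : ℝ) ^ k
              / ((s.factorial : ℝ) * ((i - s).factorial : ℝ))) *
          (i.factorial : ℝ) * (m.choose i : ℝ) *
          ((n.choose m : ℝ) * (iteratedDeriv m u x * iteratedDeriv (n-m) v x)) := by
    intro i hi
    by_cases him : i ≤ m
    · rw [if_pos him]
      have hcm := Nat.choose_mul (n := n) him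
      have hcast : (n.choose i : ℝ) * ((n-i).choose (m-i) : ℝ)
          = (n.choose m : ℝ) * (m.choose i : ℝ) := by exact_mod_cast hcm.symm
      linear_combination ((∑ s ∈ Finset.range (i + 1),
            (-1 : ℝ) ^ (s + i) * (s : ℝ) ^ k
              / ((s.factorial : ℝ) * ((i - s).factorial : ℝ))) * (i.factorial : ℝ) *
          iteratedDeriv m u x * iteratedDeriv (n-m) v x) * hcast
    · rw [if_neg him]
      rw [Nat.choose_eq_zero_of_lt (by omega : m < i)]
      simp
  rw [Finset.sum_congr rfl hper, ← Finset.sum_mul, coeff_sum k m]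
  ring
end

section
/- Let n and k be natural numbers with k ≤ n, let z be an integer, and let u, v : ℝ → ℝ be n times continuously differentiable. Suppose r₁, …, r_{k+1} are real numbers such that ∏_{j=0}^{k−1}(t − j) = ∑_{s=1}^{k+1} r_s · t^{k+1−s} for every real t. Then for every x ∈ ℝ, ∑_{i=0}^{n} (1/k!) · (∏_{j=0}^{k−1}(i − z − j)) · C(n,i) · v^{(n−i)}(x) · u^{(i)}(x) = (1/k!) · ∑_{s=1}^{k+1} r_s · ∑_{l=0}^{k+1−s} C(k+1−s, l) · (−z)^{k+1−s−l} · ∑_{i=0}^{l} ( ∑_{s₀=0}^{i} (−1)^{s₀+i} · s₀^l / (s₀! · (i−s₀)!) ) · C(n,i) · i! · (u^{(i)}·v)^{(n−i)}(x), with the convention 0⁰ = 1. -/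
open Finset

lemma descFac_mul (s₀ j : ℕ) :
    s₀ * s₀.descFactorial j = s₀.descFactorial (j+1) + j * s₀.descFactorial j := by
  rw [Nat.descFactorial_succ]
  rcases le_or_gt j s₀ with h | h
  · rw [← Nat.add_mul, Nat.sub_add_cancel h]
  · rw [Nat.descFactorial_eq_zero_iff_lt.2 h]; simp

lemma exists_c (l : ℕ) : ∃ c : ℕ → ℝ, ∀ s₀ : ℕ,
    (s₀:ℝ)^l = ∑ j ∈ range (l+1), c j * (s₀.descFactorial j : ℝ) := by
  induction l with
  | zero => exact ⟨fun _ => 1, fun s₀ => by simp⟩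
  | succ l ih =>
    obtain ⟨c, hc⟩ := ih
    refine ⟨fun j => (if j = 0 then (0:ℝ) else c (j-1)) + (if j < l+1 then (j:ℝ) * c j else 0),
      fun s₀ => ?_⟩
    have h1 : (s₀:ℝ)^(l+1) = ∑ j ∈ range (l+1),
        c j * ((s₀.descFactorial (j+1) : ℝ) + j * (s₀.descFactorial j : ℝ)) := by
      rw [pow_succ, hc, sum_mul]
      refine sum_congr rfl fun j _ => ?_
      have := descFac_mul s₀ j
      have : ((s₀ * s₀.descFactorial j : ℕ) : ℝ)
          = ((s₀.descFactorial (j+1) + j * s₀.descFactorial j : ℕ) : ℝ) := by rw [this]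
      push_cast at this
      rw [mul_comm (c j)]; rw [mul_comm (c j) _] at *
      linear_combination c j * this
    rw [h1]
    have expand : ∀ j, c j * ((s₀.descFactorial (j+1) : ℝ) + j * (s₀.descFactorial j : ℝ))
        = c j * (s₀.descFactorial (j+1) : ℝ) + ((j:ℝ) * c j) * (s₀.descFactorial j : ℝ) := by
      intro j; ring
    simp only [expand, sum_add_distrib, add_mul]
    congr 1
    · -- ∑_{j∈range(l+1)} c j * d(j+1) = ∑_{j∈range(l+2)} (if j=0 then 0 else c (j-1)) * d j
      rw [Finset.sum_range_succ' (fun j => (if j = 0 then (0:ℝ) else c (j-1)) * (s₀.descFactorial j : ℝ)) (l+1)]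
      simp
    · rw [eq_comm, Finset.sum_range_succ, if_neg (lt_irrefl (l+1)), zero_mul, add_zero]
      refine sum_congr rfl fun j hj => ?_
      rw [if_pos (mem_range.1 hj)]

lemma alt_real (m : ℕ) (hm : m ≠ 0) :
    ∑ t ∈ range (m+1), (-1:ℝ)^t * (m.choose t : ℝ) = 0 := by
  have h := Int.alternating_sum_range_choose_of_ne hm
  have := congrArg (Int.cast : ℤ → ℝ) h
  push_cast at this
  simpa using this

lemma choose_descFac (m j t : ℕ) (h : j + t ≤ m) :
    m.choose (j+t) * (j+t).descFactorial j = m.descFactorial j * (m-j).choose t := by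
  rw [Nat.descFactorial_eq_factorial_mul_choose, Nat.descFactorial_eq_factorial_mul_choose,
    mul_comm (m.choose (j+t)), mul_assoc, mul_comm ((j+t).choose j), Nat.choose_mul (Nat.le_add_right j t)]
  simp [mul_assoc]

lemma vanish_desc {m j : ℕ} (hj : j < m) :
    ∑ s₀ ∈ range (m+1), (-1:ℝ)^s₀ * (m.choose s₀ : ℝ) * (s₀.descFactorial j : ℝ) = 0 := by
  have hsub : Finset.Ico j (m+1) ⊆ range (m+1) := by
    rw [range_eq_Ico]; exact Finset.Ico_subset_Ico (Nat.zero_le j) le_rfl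
  rw [← Finset.sum_subset hsub (fun s₀ hmem hs => by
    have hsr := mem_range.1 hmem
    rw [Finset.mem_Ico, not_and] at hs
    have : s₀ < j := by
      by_contra h'
      exact hs (le_of_not_gt h') hsr
    rw [Nat.descFactorial_eq_zero_iff_lt.2 this, Nat.cast_zero, mul_zero])]
  rw [Finset.sum_Ico_eq_sum_range]
  have hm : m + 1 - j = (m - j) + 1 := by omega
  rw [hm]
  have : ∀ t ∈ range (m - j + 1),
      (-1:ℝ)^(j+t) * (m.choose (j+t) : ℝ) * ((j+t).descFactorial j : ℝ)
      = (-1:ℝ)^j * (m.descFactorial j : ℝ) * ((-1:ℝ)^t * ((m-j).choose t : ℝ)) := by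
    intro t ht
    have hle : j + t ≤ m := by have := mem_range.1 ht; omega
    have hc := choose_descFac m j t hle
    have hc' : ((m.choose (j+t) * (j+t).descFactorial j : ℕ) : ℝ)
        = ((m.descFactorial j * (m-j).choose t : ℕ) : ℝ) := by rw [hc]
    push_cast at hc'
    rw [pow_add]
    linear_combination ((-1:ℝ)^j * (-1:ℝ)^t) * hc'
  rw [Finset.sum_congr rfl this, ← Finset.mul_sum, alt_real (m-j) (by omega), mul_zero]

lemma vanish {l m : ℕ} (hl : l < m) :
    ∑ s₀ ∈ range (m+1), (-1:ℝ)^s₀ * (m.choose s₀ : ℝ) * (s₀:ℝ)^l = 0 := by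
  obtain ⟨c, hc⟩ := exists_c l
  have : ∀ s₀ ∈ range (m+1), (-1:ℝ)^s₀ * (m.choose s₀ : ℝ) * (s₀:ℝ)^l
      = ∑ j ∈ range (l+1), c j * ((-1:ℝ)^s₀ * (m.choose s₀ : ℝ) * (s₀.descFactorial j : ℝ)) := by
    intro s₀ _
    rw [hc s₀, Finset.mul_sum]
    exact Finset.sum_congr rfl fun j _ => by ring
  rw [Finset.sum_congr rfl this, Finset.sum_comm]
  refine Finset.sum_eq_zero fun j hj => ?_
  rw [← Finset.mul_sum, vanish_desc (by have := mem_range.1 hj; omega), mul_zero]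
lemma alt_real' (m : ℕ) :
    ∑ t ∈ range (m+1), (-1:ℝ)^t * (m.choose t : ℝ) = if m = 0 then 1 else 0 := by
  rcases eq_or_ne m 0 with h|h
  · subst h; simp
  · rw [if_neg h]; exact alt_real m h

lemma inv_binomial (i2 N : ℕ) (hN : i2 ≤ N) (f : ℕ → ℝ) :
    ∑ i' ∈ range (N+1), (i2.choose i' : ℝ) *
      ∑ s₀ ∈ range (i'+1), (-1:ℝ)^(s₀+i') * (i'.choose s₀ : ℝ) * f s₀ = f i2 := by
  have hsub : range (i2+1) ⊆ range (N+1) := range_subset_range.2 (by omega)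
  rw [← Finset.sum_subset hsub (fun i' _ hi' => by
    have : i2 < i' := by simpa [mem_range, Nat.lt_succ_iff] using hi'
    rw [Nat.choose_eq_zero_of_lt this, Nat.cast_zero, zero_mul])]
  have hinner : ∀ i' ∈ range (i2+1), (i2.choose i' : ℝ) *
      ∑ s₀ ∈ range (i'+1), (-1:ℝ)^(s₀+i') * (i'.choose s₀ : ℝ) * f s₀
      = ∑ s₀ ∈ range (i2+1), (i2.choose i' : ℝ) * ((-1:ℝ)^(s₀+i') * (i'.choose s₀ : ℝ) * f s₀) := by
    intro i' hi'
    have hss : range (i'+1) ⊆ range (i2+1) := range_subset_range.2 (by have := mem_range.1 hi'; omega)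
    rw [Finset.mul_sum]
    exact Finset.sum_subset hss (fun s₀ _ hs₀ => by
      have : i' < s₀ := by simpa [mem_range, Nat.lt_succ_iff] using hs₀
      rw [Nat.choose_eq_zero_of_lt this, Nat.cast_zero, mul_zero, zero_mul, mul_zero])
  rw [Finset.sum_congr rfl hinner, Finset.sum_comm]
  have hmain : ∀ s₀ ∈ range (i2+1),
      ∑ i' ∈ range (i2+1), (i2.choose i' : ℝ) * ((-1:ℝ)^(s₀+i') * (i'.choose s₀ : ℝ) * f s₀)
      = if s₀ = i2 then f i2 else 0 := by
    intro s₀ hs₀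
    have hs₀' := mem_range.1 hs₀
    have hsub2 : Finset.Ico s₀ (i2+1) ⊆ range (i2+1) := by
      rw [range_eq_Ico]; exact Finset.Ico_subset_Ico (Nat.zero_le _) le_rfl
    rw [← Finset.sum_subset hsub2 (fun i' hmem hi' => by
      have h1 := mem_range.1 hmem
      have : i' < s₀ := by
        rw [Finset.mem_Ico, not_and] at hi'
        by_contra h'
        exact hi' (le_of_not_gt h') h1
      rw [Nat.choose_eq_zero_of_lt this, Nat.cast_zero, mul_zero, zero_mul, mul_zero])]
    rw [Finset.sum_Ico_eq_sum_range]
    have h2 : i2 + 1 - s₀ = (i2 - s₀) + 1 := by omega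
    rw [h2]
    have hterm : ∀ t ∈ range (i2 - s₀ + 1),
        (i2.choose (s₀+t) : ℝ) * ((-1:ℝ)^(s₀+(s₀+t)) * (((s₀+t).choose s₀ : ℕ) : ℝ) * f s₀)
        = ((i2.choose s₀ : ℝ) * f s₀) * ((-1:ℝ)^t * ((i2-s₀).choose t : ℝ)) := by
      intro t ht
      have hle : s₀ + t ≤ i2 := by have := mem_range.1 ht; omega
      have hc := Nat.choose_mul (n := i2) (Nat.le_add_right s₀ t)
      have hc' : ((i2.choose (s₀+t) * (s₀+t).choose s₀ : ℕ) : ℝ)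
          = ((i2.choose s₀ * (i2-s₀).choose (s₀+t-s₀) : ℕ) : ℝ) := by rw [hc]
      push_cast at hc'
      have ht' : s₀ + t - s₀ = t := by omega
      rw [ht'] at hc'
      have hpow : (-1:ℝ)^(s₀+(s₀+t)) = (-1:ℝ)^t := by
        rw [show s₀+(s₀+t) = 2*s₀+t by ring, pow_add, pow_mul]
        norm_num
      rw [hpow]
      linear_combination f s₀ * (-1:ℝ)^t * hc'
    rw [Finset.sum_congr rfl hterm, ← Finset.mul_sum, alt_real']
    rcases eq_or_ne s₀ i2 with h|h
    · subst h; simp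
    · rw [if_neg (by omega), if_neg h, mul_zero]
  rw [Finset.sum_congr rfl hmain]
  simp

lemma key (l i2 : ℕ) :
    ∑ i' ∈ range (l+1), (i2.choose i' : ℝ) *
      ∑ s₀ ∈ range (i'+1), (-1:ℝ)^(s₀+i') * (i'.choose s₀ : ℝ) * (s₀:ℝ)^l = (i2:ℝ)^l := by
  have hsub : range (l+1) ⊆ range ((max l i2)+1) := range_subset_range.2 (by omega)
  rw [Finset.sum_subset hsub (fun i' hmem hi' => ?_),
    inv_binomial i2 (max l i2) (le_max_right l i2)]
  have hli' : l < i' := by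
    have := mem_range.1 hmem
    simp only [mem_range] at hi'
    omega
  have hz : ∑ s₀ ∈ range (i'+1), (-1:ℝ)^(s₀+i') * (i'.choose s₀ : ℝ) * (s₀:ℝ)^l = 0 := by
    have hv := vanish hli'
    calc ∑ s₀ ∈ range (i'+1), (-1:ℝ)^(s₀+i') * (i'.choose s₀:ℝ) * (s₀:ℝ)^l
        = (-1:ℝ)^i' * ∑ s₀ ∈ range (i'+1), (-1:ℝ)^s₀ * (i'.choose s₀:ℝ) * (s₀:ℝ)^l := by
          rw [Finset.mul_sum]; exact Finset.sum_congr rfl fun s₀ _ => by rw [pow_add]; ring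
      _ = 0 := by rw [hv, mul_zero]
  rw [hz, mul_zero]
lemma core (n l : ℕ) (hl : l ≤ n) (D E : ℕ → ℝ) :
    ∑ i ∈ range (l+1),
      (∑ s₀ ∈ range (i+1), (-1:ℝ)^(s₀+i) * (s₀:ℝ)^l / ((s₀.factorial:ℝ) * ((i-s₀).factorial:ℝ)))
        * (n.choose i : ℝ) * (i.factorial : ℝ) *
        (∑ j ∈ range (n-i+1), ((n-i).choose j : ℝ) * D (i+j) * E (n-i-j))
    = ∑ i2 ∈ range (n+1), (i2:ℝ)^l * (n.choose i2 : ℝ) * D i2 * E (n-i2) := by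
  have step1 : ∀ i ∈ range (l+1),
      (∑ s₀ ∈ range (i+1), (-1:ℝ)^(s₀+i) * (s₀:ℝ)^l / ((s₀.factorial:ℝ) * ((i-s₀).factorial:ℝ)))
        * (n.choose i : ℝ) * (i.factorial : ℝ) *
        (∑ j ∈ range (n-i+1), ((n-i).choose j : ℝ) * D (i+j) * E (n-i-j))
      = ∑ i2 ∈ range (n+1),
          (i2.choose i : ℝ)
            * (∑ s₀ ∈ range (i+1), (-1:ℝ)^(s₀+i) * (i.choose s₀ : ℝ) * (s₀:ℝ)^l)
            * ((n.choose i2 : ℝ) * D i2 * E (n-i2)) := by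
    intro i hi
    have hil : i ≤ l := Nat.lt_succ_iff.1 (mem_range.1 hi)
    have hin : i ≤ n := hil.trans hl
    have hS : (∑ s₀ ∈ range (i+1), (-1:ℝ)^(s₀+i) * (s₀:ℝ)^l
          / ((s₀.factorial:ℝ) * ((i-s₀).factorial:ℝ))) * (i.factorial : ℝ)
        = ∑ s₀ ∈ range (i+1), (-1:ℝ)^(s₀+i) * (i.choose s₀ : ℝ) * (s₀:ℝ)^l := by
      rw [Finset.sum_mul]
      refine Finset.sum_congr rfl fun s₀ hs₀ => ?_
      have hsi : s₀ ≤ i := Nat.lt_succ_iff.1 (mem_range.1 hs₀)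
      have hfact := Nat.choose_mul_factorial_mul_factorial hsi
      have hfact' : ((i.choose s₀ * s₀.factorial * (i - s₀).factorial : ℕ) : ℝ)
          = (i.factorial : ℝ) := by rw [hfact]
      push_cast at hfact'
      have h1 : (s₀.factorial : ℝ) ≠ 0 := Nat.cast_ne_zero.2 (Nat.factorial_ne_zero _)
      have h2 : ((i - s₀).factorial : ℝ) ≠ 0 := Nat.cast_ne_zero.2 (Nat.factorial_ne_zero _)
      rw [← hfact']
      field_simp
    have hre : ∑ j ∈ range (n-i+1), ((n-i).choose j : ℝ) * D (i+j) * E (n-i-j)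
        = ∑ i2 ∈ Finset.Ico i (n+1), ((n-i).choose (i2-i) : ℝ) * D i2 * E (n-i2) := by
      rw [Finset.sum_Ico_eq_sum_range, show n + 1 - i = n - i + 1 by omega]
      refine Finset.sum_congr rfl fun j hj => ?_
      rw [show i + j - i = j by omega, show n - (i+j) = n - i - j by omega]
    rw [hre, Finset.mul_sum]
    have hsub : Finset.Ico i (n+1) ⊆ range (n+1) := by
      rw [range_eq_Ico]; exact Finset.Ico_subset_Ico (Nat.zero_le _) le_rfl
    rw [← Finset.sum_subset hsub (fun i2 hmem hi2 => by
      have h1 := mem_range.1 hmem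
      have : i2 < i := by
        rw [Finset.mem_Ico, not_and] at hi2
        by_contra h'
        exact hi2 (le_of_not_gt h') h1
      rw [Nat.choose_eq_zero_of_lt this, Nat.cast_zero, zero_mul, zero_mul])]
    refine Finset.sum_congr rfl fun i2 hi2 => ?_
    rw [Finset.mem_Ico] at hi2
    have hid : n.choose i * (n-i).choose (i2-i) = n.choose i2 * i2.choose i :=
      (Nat.choose_mul (n := n) hi2.1).symm
    have hid' : ((n.choose i * (n-i).choose (i2-i) : ℕ) : ℝ)
        = ((n.choose i2 * i2.choose i : ℕ) : ℝ) := by rw [hid]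
    push_cast at hid'
    rw [← hS]
    set Sv := (∑ s₀ ∈ range (i+1), (-1:ℝ)^(s₀+i) * (s₀:ℝ)^l
        / ((s₀.factorial:ℝ) * ((i-s₀).factorial:ℝ))) with hSv
    linear_combination (Sv * (i.factorial:ℝ) * D i2 * E (n-i2)) * hid'
  rw [Finset.sum_congr rfl step1, Finset.sum_comm]
  refine Finset.sum_congr rfl fun i2 _ => ?_
  have := key l i2
  calc ∑ i ∈ range (l+1), (i2.choose i : ℝ)
        * (∑ s₀ ∈ range (i+1), (-1:ℝ)^(s₀+i) * (i.choose s₀ : ℝ) * (s₀:ℝ)^l)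
        * ((n.choose i2 : ℝ) * D i2 * E (n-i2))
      = (∑ i ∈ range (l+1), (i2.choose i : ℝ)
          * (∑ s₀ ∈ range (i+1), (-1:ℝ)^(s₀+i) * (i.choose s₀ : ℝ) * (s₀:ℝ)^l))
          * ((n.choose i2 : ℝ) * D i2 * E (n-i2)) := by rw [Finset.sum_mul]
    _ = (i2:ℝ)^l * ((n.choose i2 : ℝ) * D i2 * E (n-i2)) := by rw [this]
    _ = (i2:ℝ)^l * (n.choose i2 : ℝ) * D i2 * E (n-i2) := by ring

lemma pascal_sum (m : ℕ) (F G : ℕ → ℝ) :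
    ∑ j ∈ range (m+2), ((m+1).choose j : ℝ) * F j * G (m+1-j)
    = ∑ j ∈ range (m+1), (m.choose j : ℝ) * (F (j+1) * G (m-j) + F j * G (m-j+1)) := by
  have e1 : ∑ j ∈ range (m+2), ((m+1).choose j : ℝ) * F j * G (m+1-j)
      = ∑ j ∈ range (m+1), ((m+1).choose (j+1) : ℝ) * F (j+1) * G (m-j)
        + F 0 * G (m+1) := by
    rw [Finset.sum_range_succ' (fun j => ((m+1).choose j : ℝ) * F j * G (m+1-j)) (m+1)]
    simp [Nat.succ_sub_succ]
  have e2 : ∑ j ∈ range (m+2), (m.choose j : ℝ) * F j * G (m+1-j)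
      = ∑ j ∈ range (m+1), (m.choose (j+1) : ℝ) * F (j+1) * G (m-j)
        + F 0 * G (m+1) := by
    rw [Finset.sum_range_succ' (fun j => (m.choose j : ℝ) * F j * G (m+1-j)) (m+1)]
    simp [Nat.succ_sub_succ]
  have e3 : ∑ j ∈ range (m+2), (m.choose j : ℝ) * F j * G (m+1-j)
      = ∑ j ∈ range (m+1), (m.choose j : ℝ) * F j * G (m-j+1) := by
    rw [Finset.sum_range_succ]
    rw [Nat.choose_eq_zero_of_lt (by omega), Nat.cast_zero, zero_mul, zero_mul, add_zero]
    refine Finset.sum_congr rfl fun j hj => ?_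
    have := mem_range.1 hj
    rw [show m + 1 - j = m - j + 1 by omega]
  have pasc : ∀ j, ((m+1).choose (j+1) : ℝ) = (m.choose j : ℝ) + (m.choose (j+1) : ℝ) := by
    intro j
    rw [Nat.choose_succ_succ]
    push_cast
    ring
  rw [e1]
  calc ∑ j ∈ range (m+1), ((m+1).choose (j+1) : ℝ) * F (j+1) * G (m-j) + F 0 * G (m+1)
      = ∑ j ∈ range (m+1), ((m.choose j : ℝ) * (F (j+1) * G (m-j))
          + (m.choose (j+1) : ℝ) * F (j+1) * G (m-j)) + F 0 * G (m+1) := by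
        congr 1
        refine Finset.sum_congr rfl fun j _ => ?_
        rw [pasc j]; ring
    _ = ∑ j ∈ range (m+1), (m.choose j : ℝ) * (F (j+1) * G (m-j))
          + (∑ j ∈ range (m+1), (m.choose (j+1) : ℝ) * F (j+1) * G (m-j) + F 0 * G (m+1)) := by
        rw [Finset.sum_add_distrib]; ring
    _ = ∑ j ∈ range (m+1), (m.choose j : ℝ) * (F (j+1) * G (m-j))
          + ∑ j ∈ range (m+1), (m.choose j : ℝ) * F j * G (m-j+1) := by rw [← e2, e3]
    _ = ∑ j ∈ range (m+1), (m.choose j : ℝ) * (F (j+1) * G (m-j) + F j * G (m-j+1)) := by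
        rw [← Finset.sum_add_distrib]
        refine Finset.sum_congr rfl fun j _ => by ring

lemma iterDeriv_comp (i : ℕ) (f : ℝ → ℝ) : ∀ j : ℕ,
    iteratedDeriv j (iteratedDeriv i f) = iteratedDeriv (i+j) f := by
  intro j
  induction j with
  | zero => simp
  | succ j ih => rw [iteratedDeriv_succ, ih, ← iteratedDeriv_succ, Nat.add_assoc]

lemma contDiff_iterDeriv (m i : ℕ) (f : ℝ → ℝ) (hf : ContDiff ℝ (m + i : ℕ) f) :
    ContDiff ℝ m (iteratedDeriv i f) := by
  rw [iteratedDeriv_eq_iterate]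
  exact ContDiff.iterate_deriv' m i hf

lemma leibniz : ∀ (m : ℕ) (f g : ℝ → ℝ), ContDiff ℝ m f → ContDiff ℝ m g →
    iteratedDeriv m (fun y => f y * g y) = fun x =>
      ∑ j ∈ range (m+1), (m.choose j : ℝ) * iteratedDeriv j f x * iteratedDeriv (m-j) g x := by
  intro m
  induction m with
  | zero => intro f g _ _; funext x; simp
  | succ m ih =>
    intro f g hf hg
    have hf' : ContDiff ℝ m f := hf.of_le (by exact_mod_cast Nat.cast_le.2 (Nat.le_succ m))
    have hg' : ContDiff ℝ m g := hg.of_le (by exact_mod_cast Nat.cast_le.2 (Nat.le_succ m))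
    funext x
    rw [iteratedDeriv_succ, ih f g hf' hg']
    have hdifff : ∀ j, j ≤ m → Differentiable ℝ (iteratedDeriv j f) := fun j hj =>
      hf.differentiable_iteratedDeriv j (by exact_mod_cast Nat.cast_lt.2 (Nat.lt_succ_of_le hj))
    have hdiffg : ∀ j, j ≤ m → Differentiable ℝ (iteratedDeriv j g) := fun j hj =>
      hg.differentiable_iteratedDeriv j (by exact_mod_cast Nat.cast_lt.2 (Nat.lt_succ_of_le hj))
    rw [deriv_fun_sum (fun j hj => by
      have hj' := mem_range.1 hj
      exact (((hdifff j (by omega) x).const_mul _).mul (hdiffg (m-j) (by omega) x)))]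
    have hterm : ∀ j ∈ range (m+1),
        deriv (fun x => (m.choose j : ℝ) * iteratedDeriv j f x * iteratedDeriv (m-j) g x) x
        = (m.choose j : ℝ) * (iteratedDeriv (j+1) f x * iteratedDeriv (m-j) g x
            + iteratedDeriv j f x * iteratedDeriv (m-j+1) g x) := by
      intro j hj
      have hj' := mem_range.1 hj
      rw [deriv_fun_mul (((hdifff j (by omega)).const_mul _).differentiableAt)
        ((hdiffg (m-j) (by omega)).differentiableAt),
        deriv_const_mul _ ((hdifff j (by omega)).differentiableAt),
        ← iteratedDeriv_succ, ← iteratedDeriv_succ]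
      ring
    rw [Finset.sum_congr rfl hterm, ← pascal_sum m (fun j => iteratedDeriv j f x)
      (fun j => iteratedDeriv j g x)]


/-- For naturals `k ≤ n`, an integer `z`, `n` times continuously differentiable
`u, v : ℝ → ℝ`, and reals `r₁, …, r_{k+1}` with
`∏_{j=0}^{k−1}(t − j) = ∑_{s=1}^{k+1} r_s · t^{k+1−s}` for all real `t`, one has
`∑_{i=0}^{n} (1/k!)·(∏_{j=0}^{k−1}(i−z−j))·C(n,i)·v⁽ⁿ⁻ⁱ⁾(x)·u⁽ⁱ⁾(x)
 = (1/k!)·∑_{s=1}^{k+1} r_s · ∑_{l=0}^{k+1−s} C(k+1−s,l)·(−z)^{k+1−s−l}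
     · ∑_{i=0}^{l} (∑_{s₀=0}^{i} (−1)^{s₀+i} s₀ˡ/(s₀!(i−s₀)!))·C(n,i)·i!·(u⁽ⁱ⁾·v)⁽ⁿ⁻ⁱ⁾(x)`,
with the convention `0⁰ = 1`. -/
theorem statement3 (n k : ℕ) (hkn : k ≤ n) (z : ℤ) (u v : ℝ → ℝ)
    (hu : ContDiff ℝ n u) (hv : ContDiff ℝ n v)
    (r : ℕ → ℝ)
    (hr : ∀ t : ℝ, ∏ j ∈ Finset.range k, (t - (j : ℝ))
        = ∑ s ∈ Finset.Icc 1 (k + 1), r s * t ^ (k + 1 - s))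
    (x : ℝ) :
    ∑ i ∈ Finset.range (n + 1),
        (1 / (k.factorial : ℝ)) * (∏ j ∈ Finset.range k, ((i : ℝ) - (z : ℝ) - (j : ℝ))) *
          (n.choose i : ℝ) * iteratedDeriv (n - i) v x * iteratedDeriv i u x
      = (1 / (k.factorial : ℝ)) *
          ∑ s ∈ Finset.Icc 1 (k + 1), r s *
            ∑ l ∈ Finset.range (k + 1 - s + 1),
              ((k + 1 - s).choose l : ℝ) * (-(z : ℝ)) ^ (k + 1 - s - l) *
                ∑ i ∈ Finset.range (l + 1),
                  (∑ s₀ ∈ Finset.range (i + 1),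
                      (-1 : ℝ) ^ (s₀ + i) * (s₀ : ℝ) ^ l
                        / ((s₀.factorial : ℝ) * ((i - s₀).factorial : ℝ))) *
                    (n.choose i : ℝ) * (i.factorial : ℝ) *
                    iteratedDeriv (n - i) (fun y => iteratedDeriv i u y * v y) x := by
  classical
  -- Leibniz expansion of the mixed derivative
  have hP : ∀ i, i ≤ n → iteratedDeriv (n-i) (fun y => iteratedDeriv i u y * v y) x
      = ∑ j ∈ Finset.range (n-i+1), ((n-i).choose j : ℝ) * iteratedDeriv (i+j) u x
          * iteratedDeriv (n-i-j) v x := by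
    intro i hi
    have hfu : ContDiff ℝ ((n-i) + i : ℕ) u := by rw [show (n-i)+i = n by omega]; exact hu
    have hvv : ContDiff ℝ ((n-i : ℕ) : ℕ) v :=
      hv.of_le (by exact_mod_cast Nat.cast_le.2 (by omega : n - i ≤ n))
    rw [leibniz (n-i) (iteratedDeriv i u) v (contDiff_iterDeriv _ _ _ hfu) hvv]
    simp only [iterDeriv_comp]
  -- inner block rewrite via `core`
  have key_s : ∀ l : ℕ, l ≤ n →
      ∑ i ∈ Finset.range (l + 1),
        (∑ s₀ ∈ Finset.range (i + 1),
            (-1 : ℝ) ^ (s₀ + i) * (s₀ : ℝ) ^ l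
              / ((s₀.factorial : ℝ) * ((i - s₀).factorial : ℝ))) *
          (n.choose i : ℝ) * (i.factorial : ℝ) *
          iteratedDeriv (n - i) (fun y => iteratedDeriv i u y * v y) x
      = ∑ i2 ∈ Finset.range (n+1), (i2:ℝ)^l * (n.choose i2 : ℝ)
          * iteratedDeriv i2 u x * iteratedDeriv (n - i2) v x := by
    intro l hln
    have h1 : ∀ i ∈ Finset.range (l+1),
        (∑ s₀ ∈ Finset.range (i + 1),
            (-1 : ℝ) ^ (s₀ + i) * (s₀ : ℝ) ^ l
              / ((s₀.factorial : ℝ) * ((i - s₀).factorial : ℝ))) *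
          (n.choose i : ℝ) * (i.factorial : ℝ) *
          iteratedDeriv (n - i) (fun y => iteratedDeriv i u y * v y) x
        = (∑ s₀ ∈ Finset.range (i + 1),
            (-1 : ℝ) ^ (s₀ + i) * (s₀ : ℝ) ^ l
              / ((s₀.factorial : ℝ) * ((i - s₀).factorial : ℝ))) *
          (n.choose i : ℝ) * (i.factorial : ℝ) *
          (∑ j ∈ Finset.range (n-i+1), ((n-i).choose j : ℝ) * iteratedDeriv (i+j) u x
            * iteratedDeriv (n-i-j) v x) := by
      intro i hi
      have hin : i ≤ n := by have := Finset.mem_range.1 hi; omega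
      rw [hP i hin]
    rw [Finset.sum_congr rfl h1]
    have := core n l hln (fun t => iteratedDeriv t u x) (fun t => iteratedDeriv t v x)
    simpa only [] using this
  -- rewrite RHS inner sums
  have hrhs1 : ∀ s ∈ Finset.Icc 1 (k+1),
      r s * ∑ l ∈ Finset.range (k + 1 - s + 1),
        ((k + 1 - s).choose l : ℝ) * (-(z : ℝ)) ^ (k + 1 - s - l) *
          ∑ i ∈ Finset.range (l + 1),
            (∑ s₀ ∈ Finset.range (i + 1),
                (-1 : ℝ) ^ (s₀ + i) * (s₀ : ℝ) ^ l
                  / ((s₀.factorial : ℝ) * ((i - s₀).factorial : ℝ))) *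
              (n.choose i : ℝ) * (i.factorial : ℝ) *
              iteratedDeriv (n - i) (fun y => iteratedDeriv i u y * v y) x
      = r s * ∑ i2 ∈ Finset.range (n+1),
          ((i2 : ℝ) - (z : ℝ)) ^ (k + 1 - s) * ((n.choose i2 : ℝ)
            * iteratedDeriv i2 u x * iteratedDeriv (n - i2) v x) := by
    intro s hs
    have hs' := Finset.mem_Icc.1 hs
    congr 1
    have h2 : ∀ l ∈ Finset.range (k + 1 - s + 1),
        ((k + 1 - s).choose l : ℝ) * (-(z : ℝ)) ^ (k + 1 - s - l) *
          ∑ i ∈ Finset.range (l + 1),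
            (∑ s₀ ∈ Finset.range (i + 1),
                (-1 : ℝ) ^ (s₀ + i) * (s₀ : ℝ) ^ l
                  / ((s₀.factorial : ℝ) * ((i - s₀).factorial : ℝ))) *
              (n.choose i : ℝ) * (i.factorial : ℝ) *
              iteratedDeriv (n - i) (fun y => iteratedDeriv i u y * v y) x
        = ∑ i2 ∈ Finset.range (n+1),
            ((k + 1 - s).choose l : ℝ) * (-(z : ℝ)) ^ (k + 1 - s - l) *
              ((i2:ℝ)^l * (n.choose i2 : ℝ)
                * iteratedDeriv i2 u x * iteratedDeriv (n - i2) v x) := by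
      intro l hl
      have hln : l ≤ n := by
        have := Finset.mem_range.1 hl
        omega
      rw [key_s l hln, Finset.mul_sum]
    rw [Finset.sum_congr rfl h2, Finset.sum_comm]
    refine Finset.sum_congr rfl fun i2 _ => ?_
    have hadd := add_pow (i2 : ℝ) (-(z:ℝ)) (k + 1 - s)
    calc ∑ l ∈ Finset.range (k + 1 - s + 1),
          ((k + 1 - s).choose l : ℝ) * (-(z : ℝ)) ^ (k + 1 - s - l) *
            ((i2:ℝ)^l * (n.choose i2 : ℝ)
              * iteratedDeriv i2 u x * iteratedDeriv (n - i2) v x)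
        = (∑ l ∈ Finset.range (k + 1 - s + 1),
            (i2:ℝ)^l * (-(z : ℝ)) ^ (k + 1 - s - l) * ((k + 1 - s).choose l : ℝ))
            * ((n.choose i2 : ℝ) * iteratedDeriv i2 u x * iteratedDeriv (n - i2) v x) := by
          rw [Finset.sum_mul]
          exact Finset.sum_congr rfl fun l _ => by ring
      _ = ((i2 : ℝ) + -(z : ℝ)) ^ (k + 1 - s) * ((n.choose i2 : ℝ)
            * iteratedDeriv i2 u x * iteratedDeriv (n - i2) v x) := by rw [← hadd]
      _ = ((i2 : ℝ) - (z : ℝ)) ^ (k + 1 - s) * ((n.choose i2 : ℝ)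
            * iteratedDeriv i2 u x * iteratedDeriv (n - i2) v x) := by ring_nf
  rw [Finset.sum_congr rfl hrhs1]
  -- swap s and i2, apply hr
  have hswap : ∑ s ∈ Finset.Icc 1 (k+1), r s * ∑ i2 ∈ Finset.range (n+1),
        ((i2 : ℝ) - (z : ℝ)) ^ (k + 1 - s) * ((n.choose i2 : ℝ)
          * iteratedDeriv i2 u x * iteratedDeriv (n - i2) v x)
      = ∑ i2 ∈ Finset.range (n+1),
          (∏ j ∈ Finset.range k, ((i2 : ℝ) - (z : ℝ) - (j : ℝ)))
            * ((n.choose i2 : ℝ) * iteratedDeriv i2 u x * iteratedDeriv (n - i2) v x) := by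
    have h3 : ∀ s ∈ Finset.Icc 1 (k+1), r s * ∑ i2 ∈ Finset.range (n+1),
        ((i2 : ℝ) - (z : ℝ)) ^ (k + 1 - s) * ((n.choose i2 : ℝ)
          * iteratedDeriv i2 u x * iteratedDeriv (n - i2) v x)
        = ∑ i2 ∈ Finset.range (n+1), r s * (((i2 : ℝ) - (z : ℝ)) ^ (k + 1 - s)
            * ((n.choose i2 : ℝ) * iteratedDeriv i2 u x * iteratedDeriv (n - i2) v x)) :=
      fun s _ => by rw [Finset.mul_sum]
    rw [Finset.sum_congr rfl h3, Finset.sum_comm]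
    refine Finset.sum_congr rfl fun i2 _ => ?_
    have hhr := hr ((i2 : ℝ) - (z : ℝ))
    calc ∑ s ∈ Finset.Icc 1 (k+1), r s * (((i2 : ℝ) - (z : ℝ)) ^ (k + 1 - s)
          * ((n.choose i2 : ℝ) * iteratedDeriv i2 u x * iteratedDeriv (n - i2) v x))
        = (∑ s ∈ Finset.Icc 1 (k+1), r s * ((i2 : ℝ) - (z : ℝ)) ^ (k + 1 - s))
            * ((n.choose i2 : ℝ) * iteratedDeriv i2 u x * iteratedDeriv (n - i2) v x) := by
          rw [Finset.sum_mul]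
          exact Finset.sum_congr rfl fun s _ => by ring
      _ = (∏ j ∈ Finset.range k, ((i2 : ℝ) - (z : ℝ) - (j : ℝ)))
            * ((n.choose i2 : ℝ) * iteratedDeriv i2 u x * iteratedDeriv (n - i2) v x) := by
          rw [← hhr]
  rw [hswap, Finset.mul_sum]
  refine Finset.sum_congr rfl fun i _ => by ring
end

section
/- Let y₁, y₂ : ℝ → ℝ be smooth solutions of y″ = a₁·y′ + a₂·y. Then for every natural number n and every x ∈ ℝ at which the Wronskian W(x) := y₁(x)·y₂′(x) − y₁′(x)·y₂(x) is nonzero, one has α(n)(x) = (y₁(x)·y₂^{(n+2)}(x) − y₂(x)·y₁^{(n+2)}(x)) / W(x) and β(n)(x) = (y₁^{(n+2)}(x)·y₂′(x) − y₁′(x)·y₂^{(n+2)}(x)) / W(x). -/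
/-- The `n`-image coefficients `(α(n), β(n))` of the ODE `y″ = a₁·y′ + a₂·y`:
`α(0) = a₁`, `β(0) = a₂`, `α(n+1) = (α(n))′ + a₁·α(n) + β(n)`,
`β(n+1) = a₂·α(n) + (β(n))′`. -/
noncomputable def nImage (a₁ a₂ : ℝ → ℝ) : ℕ → (ℝ → ℝ) × (ℝ → ℝ)
  | 0 => (a₁, a₂)
  | n + 1 =>
      (fun x => deriv (nImage a₁ a₂ n).1 x + a₁ x * (nImage a₁ a₂ n).1 x + (nImage a₁ a₂ n).2 x,
       fun x => a₂ x * (nImage a₁ a₂ n).1 x + deriv (nImage a₁ a₂ n).2 x)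

lemma nImage_smooth (a₁ a₂ : ℝ → ℝ) (ha₁ : ContDiff ℝ (⊤ : ℕ∞) a₁)
    (ha₂ : ContDiff ℝ (⊤ : ℕ∞) a₂) :
    ∀ n, ContDiff ℝ (⊤ : ℕ∞) (nImage a₁ a₂ n).1 ∧ ContDiff ℝ (⊤ : ℕ∞) (nImage a₁ a₂ n).2 := by
  intro n
  induction n with
  | zero => exact ⟨ha₁, ha₂⟩
  | succ n ih =>
    obtain ⟨h1, h2⟩ := ih
    refine ⟨(((contDiff_infty_iff_deriv.mp h1).2.add (ha₁.mul h1)).add h2),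
      (ha₂.mul h1).add (contDiff_infty_iff_deriv.mp h2).2⟩

lemma nImage_key (a₁ a₂ : ℝ → ℝ) (ha₁ : ContDiff ℝ (⊤ : ℕ∞) a₁)
    (ha₂ : ContDiff ℝ (⊤ : ℕ∞) a₂)
    (y : ℝ → ℝ) (hy : ContDiff ℝ (⊤ : ℕ∞) y)
    (hode : ∀ x : ℝ, iteratedDeriv 2 y x = a₁ x * deriv y x + a₂ x * y x) :
    ∀ n x, iteratedDeriv (n + 2) y x
      = (nImage a₁ a₂ n).1 x * deriv y x + (nImage a₁ a₂ n).2 x * y x := by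
  have hdy : ContDiff ℝ (⊤ : ℕ∞) (deriv y) := (contDiff_infty_iff_deriv.mp hy).2
  have hode' : ∀ x, deriv (deriv y) x = a₁ x * deriv y x + a₂ x * y x := by
    intro x
    have := hode x
    rwa [show (2:ℕ) = 1 + 1 from rfl, iteratedDeriv_succ, iteratedDeriv_one] at this
  intro n
  induction n with
  | zero =>
    intro x
    simpa [nImage] using hode x
  | succ n ih =>
    intro x
    obtain ⟨hα, hβ⟩ := nImage_smooth a₁ a₂ ha₁ ha₂ n
    have hrw : iteratedDeriv (n + 2) y
        = fun t => (nImage a₁ a₂ n).1 t * deriv y t + (nImage a₁ a₂ n).2 t * y t :=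
      funext ih
    have hdα : DifferentiableAt ℝ (nImage a₁ a₂ n).1 x := hα.differentiable (by simp) x
    have hdβ : DifferentiableAt ℝ (nImage a₁ a₂ n).2 x := hβ.differentiable (by simp) x
    have hdyd : DifferentiableAt ℝ (deriv y) x := hdy.differentiable (by simp) x
    have hdy0 : DifferentiableAt ℝ y x := hy.differentiable (by simp) x
    have : iteratedDeriv (n + 1 + 2) y x = deriv (iteratedDeriv (n + 2) y) x := by
      rw [show n + 1 + 2 = (n + 2) + 1 from rfl, iteratedDeriv_succ]
    rw [this, hrw]
    rw [deriv_fun_add ((hdα.fun_mul hdyd)) ((hdβ.fun_mul hdy0)), deriv_fun_mul hdα hdyd, deriv_fun_mul hdβ hdy0,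
      hode' x]
    simp only [nImage]
    ring

/-- If `y₁, y₂` are smooth solutions of `y″ = a₁·y′ + a₂·y`, then at every point `x` where the
Wronskian `W(x) = y₁(x)·y₂′(x) − y₁′(x)·y₂(x)` is nonzero,
`α(n)(x) = (y₁·y₂⁽ⁿ⁺²⁾ − y₂·y₁⁽ⁿ⁺²⁾)(x)/W(x)` and
`β(n)(x) = (y₁⁽ⁿ⁺²⁾·y₂′ − y₁′·y₂⁽ⁿ⁺²⁾)(x)/W(x)`. -/
theorem statement5 (a₁ a₂ : ℝ → ℝ)
    (ha₁ : ContDiff ℝ (⊤ : ℕ∞) a₁) (ha₂ : ContDiff ℝ (⊤ : ℕ∞) a₂)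
    (y₁ y₂ : ℝ → ℝ) (hy₁ : ContDiff ℝ (⊤ : ℕ∞) y₁) (hy₂ : ContDiff ℝ (⊤ : ℕ∞) y₂)
    (hode₁ : ∀ x : ℝ, iteratedDeriv 2 y₁ x = a₁ x * deriv y₁ x + a₂ x * y₁ x)
    (hode₂ : ∀ x : ℝ, iteratedDeriv 2 y₂ x = a₁ x * deriv y₂ x + a₂ x * y₂ x)
    (n : ℕ) (x : ℝ)
    (hW : y₁ x * deriv y₂ x - deriv y₁ x * y₂ x ≠ 0) :
    (nImage a₁ a₂ n).1 x
        = (y₁ x * iteratedDeriv (n + 2) y₂ x - y₂ x * iteratedDeriv (n + 2) y₁ x)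
            / (y₁ x * deriv y₂ x - deriv y₁ x * y₂ x)
      ∧ (nImage a₁ a₂ n).2 x
        = (iteratedDeriv (n + 2) y₁ x * deriv y₂ x - deriv y₁ x * iteratedDeriv (n + 2) y₂ x)
            / (y₁ x * deriv y₂ x - deriv y₁ x * y₂ x) := by
  have e1 := nImage_key a₁ a₂ ha₁ ha₂ y₁ hy₁ hode₁ n x
  have e2 := nImage_key a₁ a₂ ha₁ ha₂ y₂ hy₂ hode₂ n x
  constructor
  · rw [eq_div_iff hW]
    linear_combination y₂ x * e1 - y₁ x * e2
  · rw [eq_div_iff hW]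
    linear_combination deriv y₁ x * e2 - deriv y₂ x * e1
end

section
/- Let a₁ : ℝ → ℝ be differentiable, let a₂ : ℝ → ℝ, and let α, β : ℕ → (ℝ → ℝ) be families of functions with each α(n) twice differentiable and each β(n) differentiable, satisfying α(n+1) = (α(n))′ + a₁·α(n) + β(n) and β(n+1) = a₂·α(n) + (β(n))′ for every natural number n. Then for every n and every x ∈ ℝ, α(n+2)(x) = α(n)(x)·(a₂(x) − a₁′(x)) + 2·(α(n+1))′(x) + α(n+1)(x)·a₁(x) − (α(n))′(x)·a₁(x) − (α(n))″(x). -/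
/-- If `a₁` is differentiable and families `α, β : ℕ → (ℝ → ℝ)` (with each `α(n)` twice
differentiable and each `β(n)` differentiable) satisfy
`α(n+1) = (α(n))′ + a₁·α(n) + β(n)` and `β(n+1) = a₂·α(n) + (β(n))′`, then
`α(n+2) = α(n)·(a₂ − a₁′) + 2(α(n+1))′ + α(n+1)·a₁ − (α(n))′·a₁ − (α(n))″`. -/
theorem statement6 (a₁ a₂ : ℝ → ℝ) (ha₁ : Differentiable ℝ a₁)
    (α β : ℕ → ℝ → ℝ)
    (hα : ∀ n, Differentiable ℝ (α n)) (hα' : ∀ n, Differentiable ℝ (deriv (α n)))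
    (hβ : ∀ n, Differentiable ℝ (β n))
    (hrecα : ∀ n, ∀ x : ℝ, α (n + 1) x = deriv (α n) x + a₁ x * α n x + β n x)
    (hrecβ : ∀ n, ∀ x : ℝ, β (n + 1) x = a₂ x * α n x + deriv (β n) x)
    (n : ℕ) (x : ℝ) :
    α (n + 2) x
      = α n x * (a₂ x - deriv a₁ x) + 2 * deriv (α (n + 1)) x + α (n + 1) x * a₁ x
        - deriv (α n) x * a₁ x - deriv (deriv (α n)) x := by
  have key : deriv (α (n + 1)) x
      = deriv (deriv (α n)) x + (deriv a₁ x * α n x + a₁ x * deriv (α n) x)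
        + deriv (β n) x := by
    have h : α (n + 1) = fun y => deriv (α n) y + a₁ y * α n y + β n y :=
      funext (hrecα n)
    rw [h, deriv_fun_add (show DifferentiableAt ℝ (fun y => deriv (α n) y + a₁ y * α n y) x from ((hα' n).add (ha₁.mul (hα n))) x) ((hβ n) x),
      deriv_fun_add ((hα' n) x) (show DifferentiableAt ℝ (fun y => a₁ y * α n y) x from (ha₁.mul (hα n)) x),
      deriv_fun_mul (ha₁ x) ((hα n) x)]
  have h2 : α (n + 2) x = deriv (α (n + 1)) x + a₁ x * α (n + 1) x + β (n + 1) x :=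
    hrecα (n + 1) x
  rw [h2, hrecβ n x]
  linarith [key]
end

section
/- Let a₁ : ℝ → ℝ be differentiable and a₂ : ℝ → ℝ; put b₁ := −a₁ and b₂ := a₂ − a₁′. Let y₁ : ℝ → ℝ be twice differentiable with y₁″ = a₁·y₁′ + a₂·y₁, and put ε₋₁ := 1 + y₁. Suppose ε₋₂ : ℝ → ℝ is twice differentiable and satisfies, for all x ∈ ℝ, b₁(x) = ε₋₂(x)·(b₂(x) − b₁′(x)) + 2·ε₋₁′(x) + ε₋₁(x)·b₁(x) − ε₋₂′(x)·b₁(x) − ε₋₂″(x). Then the function y₂ defined by y₂(x) := ε₋₂(x) − x·ε₋₁(x) + x satisfies y₂″(x) = a₁(x)·y₂′(x) + a₂(x)·y₂(x) for all x ∈ ℝ. -/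
/-- Let `a₁` be differentiable, `b₁ := −a₁`, `b₂ := a₂ − a₁′`.  Let `y₁` be a twice
differentiable solution of `y₁″ = a₁·y₁′ + a₂·y₁` and put `ε₋₁ := 1 + y₁`.  If a twice
differentiable `ε₋₂` satisfies
`b₁ = ε₋₂·(b₂ − b₁′) + 2ε₋₁′ + ε₋₁·b₁ − ε₋₂′·b₁ − ε₋₂″`, then
`y₂(x) := ε₋₂(x) − x·ε₋₁(x) + x` satisfies `y₂″ = a₁·y₂′ + a₂·y₂`. -/
theorem statement8 (a₁ a₂ : ℝ → ℝ) (ha₁ : Differentiable ℝ a₁)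
    (b₁ b₂ : ℝ → ℝ)
    (hb₁ : b₁ = fun x => -a₁ x) (hb₂ : b₂ = fun x => a₂ x - deriv a₁ x)
    (y₁ : ℝ → ℝ) (hy₁ : Differentiable ℝ y₁) (hy₁' : Differentiable ℝ (deriv y₁))
    (hode₁ : ∀ x : ℝ, deriv (deriv y₁) x = a₁ x * deriv y₁ x + a₂ x * y₁ x)
    (ε₁ : ℝ → ℝ) (hε₁ : ε₁ = fun x => 1 + y₁ x)
    (ε₂ : ℝ → ℝ) (hε₂ : Differentiable ℝ ε₂) (hε₂' : Differentiable ℝ (deriv ε₂))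
    (hrec : ∀ x : ℝ, b₁ x
        = ε₂ x * (b₂ x - deriv b₁ x) + 2 * deriv ε₁ x + ε₁ x * b₁ x
          - deriv ε₂ x * b₁ x - deriv (deriv ε₂) x) :
    ∀ x : ℝ, deriv (deriv (fun t => ε₂ t - t * ε₁ t + t)) x
      = a₁ x * deriv (fun t => ε₂ t - t * ε₁ t + t) x + a₂ x * (ε₂ x - x * ε₁ x + x) := by
  subst hb₁ hb₂ hε₁
  have hrec' : ∀ x, deriv (deriv ε₂) x
      = a₂ x * ε₂ x + 2 * deriv y₁ x - a₁ x * y₁ x + a₁ x * deriv ε₂ x := by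
    intro x
    have h := hrec x
    simp only [deriv.fun_neg, deriv_const_add] at h
    ring_nf at h ⊢
    linarith
  have hd1 : deriv (fun t => ε₂ t - t * (1 + y₁ t) + t)
      = fun x => deriv ε₂ x - ((1 + y₁ x) + x * deriv y₁ x) + 1 := by
    funext x
    exact ((((hε₂ x).hasDerivAt.sub ((hasDerivAt_id x).mul
      ((hasDerivAt_const x (1:ℝ)).add (hy₁ x).hasDerivAt))).add (hasDerivAt_id x)).congr_deriv
      (by simp only [id_eq, Pi.add_apply]; ring)).deriv
  intro x
  rw [hd1]
  have h2 : deriv (fun x => deriv ε₂ x - ((1 + y₁ x) + x * deriv y₁ x) + 1) x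
      = deriv (deriv ε₂) x - (deriv y₁ x + (deriv y₁ x + x * deriv (deriv y₁) x)) := by
    exact ((((hε₂' x).hasDerivAt.sub (((hasDerivAt_const x (1:ℝ)).add (hy₁ x).hasDerivAt).add
      ((hasDerivAt_id x).mul (hy₁' x).hasDerivAt))).add (hasDerivAt_const x (1:ℝ))).congr_deriv
      (by simp only [id_eq]; ring)).deriv
  rw [h2, hrec' x, hode₁ x]
  ring
end

section
/- For every natural number p and every x ∈ ℝ, ξ_p(2p+1)(x) = a(x)^{p+1}. -/
/-- The coefficients `ξ_k(n)` attached to a function `a : ℝ → ℝ`: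
`ξ₀(0) = 0`, `ξ₀(n) = n·a⁽ⁿ⁻¹⁾` for `n ≥ 1`, and for `k ≥ 1`
`ξ_k(n) = ∑_{i=0}^{n−2k} ξ_{k−1}(i+2k−2)·C(n, i+2k)·a⁽ⁿ⁻²ᵏ⁻ⁱ⁾` when `n ≥ 2k`,
`ξ_k(n) = 0` when `n < 2k`. -/
noncomputable def xi (a : ℝ → ℝ) : ℕ → ℕ → ℝ → ℝ
  | 0, n => if n = 0 then 0 else fun x => (n : ℝ) * iteratedDeriv (n - 1) a x
  | k + 1, n =>
      if 2 * (k + 1) ≤ n then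
        fun x => ∑ i ∈ Finset.range (n - 2 * (k + 1) + 1),
          xi a k (i + 2 * (k + 1) - 2) x * ((n.choose (i + 2 * (k + 1))) : ℝ)
            * iteratedDeriv (n - 2 * (k + 1) - i) a x
      else 0

lemma xi_even_zero (a : ℝ → ℝ) (k : ℕ) (x : ℝ) : xi a k (2 * k) x = 0 := by
  induction k with
  | zero => simp [xi]
  | succ k ih =>
      have h : 2 * (k + 1) ≤ 2 * (k + 1) := le_refl _
      simp only [xi, if_pos h, Nat.sub_self, Nat.zero_add, Finset.sum_range_one]
      have : 2 * (k + 1) - 2 = 2 * k := by omega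
      rw [this, ih]
      ring

/-- For every natural number `p` and every `x`, `ξ_p(2p+1)(x) = a(x)^{p+1}`. -/
theorem statement11 (a : ℝ → ℝ) (ha : ContDiff ℝ (⊤ : ℕ∞) a) (p : ℕ) (x : ℝ) :
    xi a p (2 * p + 1) x = a x ^ (p + 1) := by
  induction p with
  | zero => simp [xi]
  | succ p ih =>
      have h : 2 * (p + 1) ≤ 2 * (p + 1) + 1 := by omega
      have hsub : 2 * (p + 1) + 1 - 2 * (p + 1) = 1 := by omega
      simp only [xi, if_pos h, hsub, Finset.sum_range_succ, Finset.sum_range_one]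
      have h0 : 0 + 2 * (p + 1) - 2 = 2 * p := by omega
      have h1 : 1 + 2 * (p + 1) - 2 = 2 * p + 1 := by omega
      rw [h0, h1, xi_even_zero, ih]
      have hc : (2 * (p + 1) + 1).choose (1 + 2 * (p + 1)) = 1 := by
        rw [show 1 + 2 * (p + 1) = 2 * (p + 1) + 1 by omega, Nat.choose_self]
      rw [hc, show 1 - 1 = 0 by omega]
      simp [iteratedDeriv_zero]
      ring
end

section
/- For every natural number p ≥ 1 and every x ∈ ℝ, ξ_{p−1}(2p)(x) = p·(p+1)·a(x)^{p−1}·a′(x). -/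
lemma xiD (a : ℝ → ℝ) : ∀ k x, xi a k (2 * k) x = 0 := by
  intro k
  induction k with
  | zero => intro x; simp [xi]
  | succ k ih =>
    intro x
    have h : xi a (k+1) (2*(k+1)) x =
        ∑ i ∈ Finset.range (2*(k+1) - 2*(k+1) + 1),
          xi a k (i + 2*(k+1) - 2) x * (((2*(k+1)).choose (i + 2*(k+1))) : ℝ)
            * iteratedDeriv (2*(k+1) - 2*(k+1) - i) a x := by
      rw [xi, if_pos le_rfl]
    rw [h]
    have h1 : 2*(k+1) - 2*(k+1) + 1 = 1 := by omega
    rw [h1, Finset.sum_range_one]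
    have h2 : 0 + 2*(k+1) - 2 = 2*k := by omega
    rw [h2, ih x]
    ring

lemma xiE (a : ℝ → ℝ) : ∀ k x, xi a k (2 * k + 1) x = a x ^ (k + 1) := by
  intro k
  induction k with
  | zero => intro x; simp [xi]
  | succ k ih =>
    intro x
    have h : xi a (k+1) (2*(k+1)+1) x =
        ∑ i ∈ Finset.range (2*(k+1)+1 - 2*(k+1) + 1),
          xi a k (i + 2*(k+1) - 2) x * (((2*(k+1)+1).choose (i + 2*(k+1))) : ℝ)
            * iteratedDeriv (2*(k+1)+1 - 2*(k+1) - i) a x := by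
      rw [xi, if_pos (by omega)]
    rw [h]
    have h1 : 2*(k+1)+1 - 2*(k+1) + 1 = 2 := by omega
    rw [h1, Finset.sum_range_succ, Finset.sum_range_one]
    have h2 : 0 + 2*(k+1) - 2 = 2*k := by omega
    have h3 : 1 + 2*(k+1) - 2 = 2*k + 1 := by omega
    have h4 : 2*(k+1)+1 - 2*(k+1) - 1 = 0 := by omega
    have hc : (((2*(k+1)+1).choose (1 + 2*(k+1))) : ℝ) = 1 := by
      rw [show 1+2*(k+1) = 2*(k+1)+1 from by omega, Nat.choose_self]; norm_num
    rw [h2, h3, h4, xiD a k x, ih x, iteratedDeriv_zero, hc]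
    ring

lemma xiF (a : ℝ → ℝ) : ∀ k x,
    xi a k (2 * k + 2) x = ((k:ℝ)+1) * ((k:ℝ)+2) * a x ^ k * deriv a x := by
  intro k
  induction k with
  | zero => intro x; simp [xi, iteratedDeriv_one]
  | succ k ih =>
    intro x
    have h : xi a (k+1) (2*(k+1)+2) x =
        ∑ i ∈ Finset.range (2*(k+1)+2 - 2*(k+1) + 1),
          xi a k (i + 2*(k+1) - 2) x * (((2*(k+1)+2).choose (i + 2*(k+1))) : ℝ)
            * iteratedDeriv (2*(k+1)+2 - 2*(k+1) - i) a x := by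
      rw [xi, if_pos (by omega)]
    rw [h]
    have h1 : 2*(k+1)+2 - 2*(k+1) + 1 = 3 := by omega
    rw [h1, Finset.sum_range_succ, Finset.sum_range_succ, Finset.sum_range_one]
    have h2 : 0 + 2*(k+1) - 2 = 2*k := by omega
    have h3 : 1 + 2*(k+1) - 2 = 2*k + 1 := by omega
    have h4 : 2 + 2*(k+1) - 2 = 2*k + 2 := by omega
    have h5 : 2*(k+1)+2 - 2*(k+1) - 1 = 1 := by omega
    have h6 : 2*(k+1)+2 - 2*(k+1) - 2 = 0 := by omega
    rw [h2, h3, h4, h5, h6, xiD a k x, xiE a k x, ih x, iteratedDeriv_zero, iteratedDeriv_one]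
    have hc : (((2*(k+1)+2).choose (1 + 2*(k+1))) : ℝ) = 2*(k:ℝ) + 4 := by
      have : (2*(k+1)+2).choose (1 + 2*(k+1)) = 2*(k+1)+2 := by
        have he : 1 + 2*(k+1) = (2*(k+1)+2) - 1 := by omega
        rw [he, Nat.choose_symm (by omega), Nat.choose_one_right]
      rw [this]; push_cast; ring
    rw [hc]
    have hcc : (((2*(k+1)+2).choose (2 + 2*(k+1))) : ℝ) = 1 := by
      have : 2 + 2*(k+1) = 2*(k+1)+2 := by omega
      rw [this, Nat.choose_self]; norm_num
    rw [hcc]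
    push_cast
    ring

/-- For every natural number `p ≥ 1` and every `x`,
`ξ_{p−1}(2p)(x) = p·(p+1)·a(x)^{p−1}·a′(x)`. -/
theorem statement12 (a : ℝ → ℝ) (ha : ContDiff ℝ (⊤ : ℕ∞) a) (p : ℕ) (hp : 1 ≤ p) (x : ℝ) :
    xi a (p - 1) (2 * p) x = (p : ℝ) * ((p : ℝ) + 1) * a x ^ (p - 1) * deriv a x := by
  obtain ⟨k, rfl⟩ : ∃ k, p = k + 1 := ⟨p - 1, by omega⟩
  have h : 2 * (k + 1) = 2 * k + 2 := by ring
  simp only [Nat.add_sub_cancel, h, xiF a k x]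
  push_cast
  ring
end

section
/- For every natural number p ≥ 4 and every x ∈ ℝ, ξ_{p−2}(2p)(x) = (p²·(p−1)·(p+1)/3)·a(x)^{p−2}·a‴(x) + (2·p²·(p−1)·(p−2)·(p+1)/3)·a(x)^{p−3}·a′(x)·a″(x) + (p²·(p−1)·(p−2)·(p−3)·(p+1)/6)·a(x)^{p−4}·a′(x)³. -/
lemma xi_succ (a : ℝ → ℝ) (k j : ℕ) (x : ℝ) :
    xi a (k+1) (2*(k+1)+j) x = ∑ i ∈ Finset.range (j+1),
      xi a k (2*k+i) x * (((2*(k+1)+j).choose (i+2*(k+1))) : ℝ)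
        * iteratedDeriv (j-i) a x := by
  rw [xi, if_pos (by omega)]
  rw [show 2*(k+1)+j - 2*(k+1) + 1 = j + 1 by omega]
  refine Finset.sum_congr rfl fun i hi => ?_
  rw [show i + 2*(k+1) - 2 = 2*k + i by omega,
      show 2*(k+1)+j - 2*(k+1) - i = j - i by omega]

lemma choose3R (n : ℕ) : ((n.choose 3 : ℕ) : ℝ) = n*(n-1)*(n-2)/6 := by
  induction n with
  | zero => simp
  | succ n ih =>
    rw [show (3:ℕ) = 2+1 from rfl, Nat.choose_succ_succ, Nat.cast_add,
        Nat.cast_choose_two] at *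
    rw [ih]; push_cast; ring

lemma xiL0 (a : ℝ → ℝ) (k : ℕ) (x : ℝ) : xi a k (2*k) x = 0 := by
  induction k with
  | zero => simp [xi]
  | succ k ih =>
    rw [show 2*(k+1) = 2*(k+1)+0 by omega, xi_succ]
    simp [ih]

lemma xiL1 (a : ℝ → ℝ) (k : ℕ) (x : ℝ) : xi a k (2*k+1) x = a x ^ (k+1) := by
  induction k with
  | zero => simp [xi]
  | succ k ih =>
    rw [xi_succ]
    simp only [Finset.sum_range_succ, Finset.sum_range_zero, add_zero, zero_add]
    rw [xiL0, ih]
    rw [show (1:ℕ)+2*(k+1) = 2*(k+1)+1 by omega, Nat.choose_self]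
    norm_num [iteratedDeriv_zero]
    ring

lemma xiL2 (a : ℝ → ℝ) (k : ℕ) (x : ℝ) :
    xi a k (2*k+2) x = ((k:ℝ)+1)*((k:ℝ)+2) * a x ^ k * deriv a x := by
  induction k with
  | zero => norm_num [xi, iteratedDeriv_one]
  | succ k ih =>
    rw [xi_succ]
    simp only [Finset.sum_range_succ, Finset.sum_range_zero, add_zero, zero_add]
    rw [xiL0, xiL1, ih]
    rw [show (2:ℕ)+2*(k+1) = 2*(k+1)+2 by omega, Nat.choose_self,
        show (1:ℕ)+2*(k+1) = (2*(k+1)+1) by omega,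
        show (2*(k+1)+2).choose (2*(k+1)+1) = 2*(k+1)+2 from
          Nat.choose_succ_self_right _]
    norm_num [iteratedDeriv_zero, iteratedDeriv_one]
    ring

lemma xiL3 (a : ℝ → ℝ) (k : ℕ) (x : ℝ) :
    xi a k (2*k+3) x
      = ((k:ℝ)+1)*((k:ℝ)+2)*(4*(k:ℝ)+9)/6 * a x ^ k * iteratedDeriv 2 a x
        + (k:ℝ)*((k:ℝ)+1)*((k:ℝ)+2)*(3*(k:ℝ)+7)/6 * a x ^ (k-1)
          * (deriv a x)^2 := by
  induction k with
  | zero => norm_num [xi]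
  | succ k ih =>
    rw [xi_succ]
    simp only [Finset.sum_range_succ, Finset.sum_range_zero, add_zero, zero_add]
    rw [xiL0, xiL1, xiL2, ih]
    rw [show (3:ℕ)+2*(k+1) = 2*(k+1)+3 by omega, Nat.choose_self,
        show (2:ℕ)+2*(k+1) = (2*(k+1)+2) by omega,
        show (2*(k+1)+3).choose (2*(k+1)+2) = 2*(k+1)+3 from
          Nat.choose_succ_self_right _,
        show (1:ℕ)+2*(k+1) = 2*(k+1)+1 by omega,
        show (2*(k+1)+3).choose (2*(k+1)+1) = (2*(k+1)+3).choose 2 from by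
          rw [show 2*(k+1)+1 = (2*(k+1)+3)-2 by omega]
          exact Nat.choose_symm (by omega),
        Nat.cast_choose_two]
    norm_num [iteratedDeriv_zero, iteratedDeriv_one]
    rcases k with _ | _ | m
    · norm_num; ring
    · norm_num; ring
    · push_cast
      ring

lemma xiL4 (a : ℝ → ℝ) (k : ℕ) (x : ℝ) :
    xi a k (2*k+4) x
      = ((k:ℝ)+1)*((k:ℝ)+2)^2*((k:ℝ)+3)/3 * a x ^ k * iteratedDeriv 3 a x
        + 2*(k:ℝ)*((k:ℝ)+1)*((k:ℝ)+2)^2*((k:ℝ)+3)/3 * a x ^ (k-1)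
          * deriv a x * iteratedDeriv 2 a x
        + (k:ℝ)*((k:ℝ)-1)*((k:ℝ)+1)*((k:ℝ)+2)^2*((k:ℝ)+3)/6 * a x ^ (k-2)
          * (deriv a x)^3 := by
  induction k with
  | zero => norm_num [xi]
  | succ k ih =>
    rw [xi_succ]
    simp only [Finset.sum_range_succ, Finset.sum_range_zero, add_zero, zero_add]
    rw [xiL0, xiL1, xiL2, xiL3, ih]
    rw [show (4:ℕ)+2*(k+1) = 2*(k+1)+4 by omega, Nat.choose_self,
        show (3:ℕ)+2*(k+1) = (2*(k+1)+3) by omega,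
        show (2*(k+1)+4).choose (2*(k+1)+3) = 2*(k+1)+4 from
          Nat.choose_succ_self_right _,
        show (2:ℕ)+2*(k+1) = 2*(k+1)+2 by omega,
        show (2*(k+1)+4).choose (2*(k+1)+2) = (2*(k+1)+4).choose 2 from by
          rw [show 2*(k+1)+2 = (2*(k+1)+4)-2 by omega]
          exact Nat.choose_symm (by omega),
        show (1:ℕ)+2*(k+1) = 2*(k+1)+1 by omega,
        show (2*(k+1)+4).choose (2*(k+1)+1) = (2*(k+1)+4).choose 3 from by
          rw [show 2*(k+1)+1 = (2*(k+1)+4)-3 by omega]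
          exact Nat.choose_symm (by omega),
        Nat.cast_choose_two, choose3R]
    norm_num [iteratedDeriv_zero, iteratedDeriv_one]
    rcases k with _ | _ | _ | m
    · norm_num; ring
    · norm_num; ring
    · norm_num; ring
    · push_cast
      ring

/-- For every natural number `p ≥ 4` and every `x`,
`ξ_{p−2}(2p)(x) = (p²(p−1)(p+1)/3)·a^{p−2}·a‴ + (2p²(p−1)(p−2)(p+1)/3)·a^{p−3}·a′·a″
  + (p²(p−1)(p−2)(p−3)(p+1)/6)·a^{p−4}·a′³` at `x`. -/
theorem statement13 (a : ℝ → ℝ) (ha : ContDiff ℝ (⊤ : ℕ∞) a) (p : ℕ) (hp : 4 ≤ p) (x : ℝ) :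
    xi a (p - 2) (2 * p) x
      = (p : ℝ) ^ 2 * ((p : ℝ) - 1) * ((p : ℝ) + 1) / 3 * a x ^ (p - 2)
          * iteratedDeriv 3 a x
        + 2 * (p : ℝ) ^ 2 * ((p : ℝ) - 1) * ((p : ℝ) - 2) * ((p : ℝ) + 1) / 3 * a x ^ (p - 3)
          * deriv a x * iteratedDeriv 2 a x
        + (p : ℝ) ^ 2 * ((p : ℝ) - 1) * ((p : ℝ) - 2) * ((p : ℝ) - 3) * ((p : ℝ) + 1) / 6
          * a x ^ (p - 4) * (deriv a x) ^ 3 := by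
  rw [show 2*p = 2*(p-2)+4 by omega, xiL4]
  rw [show (p-2)-1 = p-3 by omega, show (p-2)-2 = p-4 by omega,
      Nat.cast_sub (by omega : 2 ≤ p)]
  push_cast
  ring
end

section
/- Let m ≥ 1 and let b₁, …, b_m : ℝ → ℝ be smooth. Suppose c₁, …, c_m : ℝ → ℝ are smooth and satisfy c_p′ + c_{p+1} + c₁·b_p = b_p for every 1 ≤ p ≤ m−1, together with c_m′ + c₁·b_m = b_m. Then the function Y := c₁ − 1 satisfies the adjoint equation: for all x ∈ ℝ, (−1)^m · Y^{(m)}(x) = ∑_{k=1}^{m} (−1)^{m−k} · (Y·b_k)^{(m−k)}(x). -/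
/-- Let `m ≥ 1` and `b₁, …, b_m` be smooth.  If smooth `c₁, …, c_m` satisfy
`c_p′ + c_{p+1} + c₁·b_p = b_p` for `1 ≤ p ≤ m−1` and `c_m′ + c₁·b_m = b_m`, then
`Y := c₁ − 1` satisfies the adjoint equation
`(−1)^m·Y⁽ᵐ⁾ = ∑_{k=1}^m (−1)^{m−k}·(Y·b_k)⁽ᵐ⁻ᵏ⁾`. -/
theorem statement16 (m : ℕ) (hm : 1 ≤ m) (b c : ℕ → ℝ → ℝ)
    (hb : ∀ p ∈ Finset.Icc 1 m, ContDiff ℝ (⊤ : ℕ∞) (b p))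
    (hc : ∀ p ∈ Finset.Icc 1 m, ContDiff ℝ (⊤ : ℕ∞) (c p))
    (hrec : ∀ p, 1 ≤ p → p ≤ m - 1 →
      ∀ x : ℝ, deriv (c p) x + c (p + 1) x + c 1 x * b p x = b p x)
    (hlast : ∀ x : ℝ, deriv (c m) x + c 1 x * b m x = b m x) :
    ∀ x : ℝ, (-1 : ℝ) ^ m * iteratedDeriv m (fun t => c 1 t - 1) x
      = ∑ k ∈ Finset.Icc 1 m,
          (-1 : ℝ) ^ (m - k) * iteratedDeriv (m - k) (fun t => (c 1 t - 1) * b k t) x := by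
  set Y : ℝ → ℝ := fun t => c 1 t - 1 with hYdef
  have hY : ContDiff ℝ (⊤ : ℕ∞) Y :=
    (hc 1 (Finset.mem_Icc.2 ⟨le_refl 1, hm⟩)).sub contDiff_const
  have hYb : ∀ k ∈ Finset.Icc 1 m, ContDiff ℝ (⊤ : ℕ∞) (fun t => Y t * b k t) :=
    fun k hk => hY.mul (hb k hk)
  have hdY : ∀ n : ℕ, Differentiable ℝ (iteratedDeriv n Y) := by
    intro n
    exact hY.differentiable_iteratedDeriv n (by exact_mod_cast WithTop.coe_lt_top _)
  have hdYb : ∀ k ∈ Finset.Icc 1 m, ∀ n : ℕ,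
      Differentiable ℝ (iteratedDeriv n (fun t => Y t * b k t)) := by
    intro k hk n
    exact (hYb k hk).differentiable_iteratedDeriv n (by exact_mod_cast WithTop.coe_lt_top _)
  have hdc : ∀ p ∈ Finset.Icc 1 m, Differentiable ℝ (c p) := by
    intro p hp
    exact (hc p hp).differentiable (by simp)
  -- key induction
  have key : ∀ j, j ≤ m - 1 → iteratedDeriv j Y = fun x =>
      (∑ k ∈ Finset.Icc 1 j, (-1:ℝ)^k * iteratedDeriv (j-k) (fun t => Y t * b k t) x)
        + (-1:ℝ)^j * c (j+1) x - (if j = 0 then 1 else 0) := by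
    intro j
    induction j with
    | zero =>
      intro _
      funext x
      simp [iteratedDeriv_zero, hYdef]
    | succ j ih =>
      intro hj1
      have hj : j ≤ m - 1 := Nat.le_of_succ_le hj1
      have hjm : j + 1 ≤ m - 1 := hj1
      funext x
      rw [iteratedDeriv_succ, ih hj]
      have hmemj1 : j + 1 ∈ Finset.Icc 1 m := Finset.mem_Icc.2 ⟨Nat.le_add_left 1 j, by omega⟩
      have hdsum : DifferentiableAt ℝ (fun x =>
          ∑ k ∈ Finset.Icc 1 j, (-1:ℝ)^k * iteratedDeriv (j-k) (fun t => Y t * b k t) x) x := by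
        apply DifferentiableAt.fun_sum
        intro k hk
        have hkm : k ∈ Finset.Icc 1 m := by
          simp only [Finset.mem_Icc] at hk ⊢; omega
        exact ((hdYb k hkm (j-k)) x).const_mul _
      have hdc1 : DifferentiableAt ℝ (c (j+1)) x := hdc (j+1) hmemj1 x
      rw [deriv_fun_sub (by fun_prop) (differentiableAt_const _)]
      rw [deriv_const]
      rw [deriv_fun_add hdsum (hdc1.const_mul _)]
      rw [deriv_fun_sum (fun k hk => by
        have hkm : k ∈ Finset.Icc 1 m := by
          simp only [Finset.mem_Icc] at hk ⊢; omega
        exact ((hdYb k hkm (j-k)) x).const_mul _)]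
      rw [deriv_const_mul _ hdc1]
      have hsum : ∀ k ∈ Finset.Icc 1 j,
          deriv (fun x => (-1:ℝ)^k * iteratedDeriv (j-k) (fun t => Y t * b k t) x) x
            = (-1:ℝ)^k * iteratedDeriv (j+1-k) (fun t => Y t * b k t) x := by
        intro k hk
        have hkm : k ∈ Finset.Icc 1 m := by
          simp only [Finset.mem_Icc] at hk ⊢; omega
        rw [deriv_const_mul _ ((hdYb k hkm (j-k)) x)]
        have : j + 1 - k = (j - k) + 1 := by
          simp only [Finset.mem_Icc] at hk; omega
        rw [this, iteratedDeriv_succ]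
      rw [Finset.sum_congr rfl hsum]
      -- recurrence for c (j+1)
      have hr := hrec (j+1) (Nat.le_add_left 1 j) hjm x
      rw [Finset.sum_Icc_succ_top (Nat.le_add_left 1 j)]
      have h0 : iteratedDeriv (j+1-(j+1)) (fun t => Y t * b (j+1) t) x = Y x * b (j+1) x := by
        simp
      rw [h0]
      have hYx : Y x = c 1 x - 1 := rfl
      rw [pow_succ, if_neg (Nat.succ_ne_zero j)]
      linear_combination ((-1:ℝ)^j) * hr + ((-1:ℝ)^j * b (j+1) x) * hYx
  -- final step
  intro x
  have hm1 : m - 1 + 1 = m := Nat.succ_pred_eq_of_pos hm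
  have hkey := key (m-1) le_rfl
  have step : iteratedDeriv m Y x
      = (∑ k ∈ Finset.Icc 1 (m-1), (-1:ℝ)^k * iteratedDeriv (m-k) (fun t => Y t * b k t) x)
        + (-1:ℝ)^m * (Y x * b m x) := by
    conv_lhs => rw [← hm1, iteratedDeriv_succ, hkey]
    have hdsum : DifferentiableAt ℝ (fun x =>
        ∑ k ∈ Finset.Icc 1 (m-1), (-1:ℝ)^k * iteratedDeriv (m-1-k) (fun t => Y t * b k t) x) x := by
      apply DifferentiableAt.fun_sum
      intro k hk
      have hkm : k ∈ Finset.Icc 1 m := by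
        simp only [Finset.mem_Icc] at hk ⊢; omega
      exact ((hdYb k hkm (m-1-k)) x).const_mul _
    have hmm : m ∈ Finset.Icc 1 m := Finset.mem_Icc.2 ⟨hm, le_rfl⟩
    have hdcm : DifferentiableAt ℝ (c ((m-1)+1)) x := by rw [hm1]; exact hdc m hmm x
    rw [deriv_fun_sub (by fun_prop) (differentiableAt_const _), deriv_const,
      deriv_fun_add hdsum (hdcm.const_mul _),
      deriv_fun_sum (fun k hk => by
        have hkm : k ∈ Finset.Icc 1 m := by
          simp only [Finset.mem_Icc] at hk ⊢; omega
        exact ((hdYb k hkm (m-1-k)) x).const_mul _),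
      deriv_const_mul _ hdcm]
    have hsum : ∀ k ∈ Finset.Icc 1 (m-1),
        deriv (fun x => (-1:ℝ)^k * iteratedDeriv (m-1-k) (fun t => Y t * b k t) x) x
          = (-1:ℝ)^k * iteratedDeriv (m-k) (fun t => Y t * b k t) x := by
      intro k hk
      have hkm : k ∈ Finset.Icc 1 m := by
        simp only [Finset.mem_Icc] at hk ⊢; omega
      rw [deriv_const_mul _ ((hdYb k hkm (m-1-k)) x)]
      have : m - k = (m - 1 - k) + 1 := by
        simp only [Finset.mem_Icc] at hk; omega
      rw [this, iteratedDeriv_succ]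
    rw [Finset.sum_congr rfl hsum]
    have hl := hlast x
    have hcm : deriv (c ((m-1)+1)) x = deriv (c m) x := by rw [hm1]
    rw [hcm]
    have hYx : Y x = c 1 x - 1 := rfl
    have hpow : (-1:ℝ)^(m-1) * (-1:ℝ) = (-1:ℝ)^m := by
      rw [← pow_succ, hm1]
    rw [← hpow]
    linear_combination ((-1:ℝ)^(m-1)) * hl + ((-1:ℝ)^(m-1) * b m x) * hYx
  rw [step, mul_add, Finset.mul_sum]
  have hfull : Finset.Icc 1 m = insert m (Finset.Icc 1 (m-1)) := by
    ext k
    simp only [Finset.mem_Icc, Finset.mem_insert]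
    omega
  rw [hfull, Finset.sum_insert (by simp only [Finset.mem_Icc]; omega)]
  have hterm : (-1:ℝ)^(m-m) * iteratedDeriv (m-m) (fun t => Y t * b m t) x
      = (-1:ℝ)^m * ((-1:ℝ)^m * (Y x * b m x)) := by
    simp [Nat.sub_self]
    rw [← mul_assoc, ← pow_add, ← two_mul, pow_mul]
    simp
  rw [hterm, add_comm]
  congr 1
  apply Finset.sum_congr rfl
  intro k hk
  simp only [Finset.mem_Icc] at hk
  rw [← mul_assoc, ← pow_add]
  have : m + k = (m - k) + 2 * k := by omega
  rw [this, pow_add, pow_mul]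
  simp
  rfl
end

section
/- Let b₁, b₂, b₃, F : ℝ → ℝ, and let y₁, y₂ : ℝ → ℝ be three times differentiable solutions of y‴ + b₁·y″ + b₂·y′ + b₃·y = 0 such that y₂ is nowhere vanishing and the function w := (y₁/y₂)′ is nowhere vanishing. Let A, G, H, K : ℝ → ℝ be differentiable functions with A′ = b₁, G′(x) = e^{A(x)}·y₂(x)²·w(x)·F(x), H′(x) = e^{−A(x)}·G(x)/(y₂(x)³·w(x)²), and K′(x) = w(x)·H(x) for all x ∈ ℝ. Then Y := y₂·K is three times differentiable and satisfies Y‴(x) + b₁(x)·Y″(x) + b₂(x)·Y′(x) + b₃(x)·Y(x) = F(x) for all x ∈ ℝ. -/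
set_option maxHeartbeats 4000000 in
/-- Let `y₁, y₂` be three times differentiable solutions of
`y‴ + b₁·y″ + b₂·y′ + b₃·y = 0` with `y₂` nowhere vanishing and `w := (y₁/y₂)′` nowhere
vanishing.  If `A, G, H, K` are differentiable with `A′ = b₁`, `G′ = e^A·y₂²·w·F`,
`H′ = e^{−A}·G/(y₂³·w²)` and `K′ = w·H`, then `Y := y₂·K` is three times differentiable and
satisfies `Y‴ + b₁·Y″ + b₂·Y′ + b₃·Y = F`. -/
theorem statement18 (b₁ b₂ b₃ F : ℝ → ℝ)
    (y₁ y₂ : ℝ → ℝ)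
    (hy₁ : Differentiable ℝ y₁) (hy₁' : Differentiable ℝ (deriv y₁))
    (hy₁'' : Differentiable ℝ (deriv (deriv y₁)))
    (hy₂ : Differentiable ℝ y₂) (hy₂' : Differentiable ℝ (deriv y₂))
    (hy₂'' : Differentiable ℝ (deriv (deriv y₂)))
    (hode₁ : ∀ x : ℝ, deriv (deriv (deriv y₁)) x + b₁ x * deriv (deriv y₁) x
        + b₂ x * deriv y₁ x + b₃ x * y₁ x = 0)
    (hode₂ : ∀ x : ℝ, deriv (deriv (deriv y₂)) x + b₁ x * deriv (deriv y₂) x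
        + b₂ x * deriv y₂ x + b₃ x * y₂ x = 0)
    (hy₂0 : ∀ x : ℝ, y₂ x ≠ 0)
    (w : ℝ → ℝ) (hw : w = deriv (fun x => y₁ x / y₂ x)) (hw0 : ∀ x : ℝ, w x ≠ 0)
    (A G H K : ℝ → ℝ)
    (hA : Differentiable ℝ A) (hG : Differentiable ℝ G)
    (hH : Differentiable ℝ H) (hK : Differentiable ℝ K)
    (hA' : ∀ x : ℝ, deriv A x = b₁ x)
    (hG' : ∀ x : ℝ, deriv G x = Real.exp (A x) * (y₂ x) ^ 2 * w x * F x)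
    (hH' : ∀ x : ℝ, deriv H x = Real.exp (-A x) * G x / ((y₂ x) ^ 3 * (w x) ^ 2))
    (hK' : ∀ x : ℝ, deriv K x = w x * H x) :
    (Differentiable ℝ (fun t => y₂ t * K t)
        ∧ Differentiable ℝ (deriv (fun t => y₂ t * K t))
        ∧ Differentiable ℝ (deriv (deriv (fun t => y₂ t * K t))))
      ∧ ∀ x : ℝ, deriv (deriv (deriv (fun t => y₂ t * K t))) x
          + b₁ x * deriv (deriv (fun t => y₂ t * K t)) x
          + b₂ x * deriv (fun t => y₂ t * K t) x + b₃ x * (y₂ x * K x) = F x := by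
  have hy20 : ∀ x : ℝ, y₂ x * y₂ x ≠ 0 := fun x => mul_ne_zero (hy₂0 x) (hy₂0 x)
  have hN : Differentiable ℝ (fun x => (deriv y₁ x * y₂ x - y₁ x * deriv y₂ x)) := (hy₁'.mul hy₂).sub (hy₁.mul hy₂')
  have hM : Differentiable ℝ (fun x => (deriv (deriv y₁) x * y₂ x - y₁ x * deriv (deriv y₂) x)) := (hy₁''.mul hy₂).sub (hy₁.mul hy₂'')
  have hD : Differentiable ℝ (fun x => (y₂ x * y₂ x)) := hy₂.mul hy₂
  have hE : Differentiable ℝ (fun x => (deriv y₂ x * y₂ x + y₂ x * deriv y₂ x)) := (hy₂'.mul hy₂).add (hy₂.mul hy₂')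
  have hQ : Differentiable ℝ (fun x => ((deriv y₁ x * y₂ x - y₁ x * deriv y₂ x) / (y₂ x * y₂ x))) := hN.div hD hy20
  have hRnum : Differentiable ℝ (fun x => ((deriv (deriv y₁) x * y₂ x - y₁ x * deriv (deriv y₂) x) * (y₂ x * y₂ x) - (deriv y₁ x * y₂ x - y₁ x * deriv y₂ x) * (deriv y₂ x * y₂ x + y₂ x * deriv y₂ x))) := (hM.mul hD).sub (hN.mul hE)
  have hRden : Differentiable ℝ (fun x => ((y₂ x * y₂ x) * (y₂ x * y₂ x))) := hD.mul hD
  have hRden0 : ∀ x : ℝ, (y₂ x * y₂ x) * (y₂ x * y₂ x) ≠ 0 := fun x => mul_ne_zero (hy20 x) (hy20 x)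
  have hR : Differentiable ℝ (fun x => (((deriv (deriv y₁) x * y₂ x - y₁ x * deriv (deriv y₂) x) * (y₂ x * y₂ x) - (deriv y₁ x * y₂ x - y₁ x * deriv y₂ x) * (deriv y₂ x * y₂ x + y₂ x * deriv y₂ x)) / ((y₂ x * y₂ x) * (y₂ x * y₂ x)))) := hRnum.div hRden hRden0
  have hwval : ∀ x : ℝ, w x = ((deriv y₁ x * y₂ x - y₁ x * deriv y₂ x) / (y₂ x * y₂ x)) := by
    intro x
    rw [hw, deriv_fun_div (hy₁ x) (hy₂ x) (hy₂0 x)]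
    ring
  have hN0 : ∀ x : ℝ, (deriv y₁ x * y₂ x - y₁ x * deriv y₂ x) ≠ 0 := by
    intro x h
    exact hw0 x (by rw [hwval x, h, zero_div])
  have hExp : Differentiable ℝ (fun x => Real.exp (-A x)) := hA.neg.exp
  have hExpd : ∀ x : ℝ, deriv (fun x => Real.exp (-A x)) x = Real.exp (-A x) * -deriv A x :=
    fun x => ((hA x).hasDerivAt.neg.exp).deriv
  have hH2 : ∀ x : ℝ, deriv H x
      = Real.exp (-A x) * G x * y₂ x / ((deriv y₁ x * y₂ x - y₁ x * deriv y₂ x) * (deriv y₁ x * y₂ x - y₁ x * deriv y₂ x)) := by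
    intro x
    rw [hH' x, hwval x]
    have hb := hy₂0 x
    have hn := hN0 x
    field_simp
  have hNd : ∀ x : ℝ, deriv (fun x => (deriv y₁ x * y₂ x - y₁ x * deriv y₂ x)) x = (deriv (deriv y₁) x * y₂ x - y₁ x * deriv (deriv y₂) x) := by
    intro x
    rw [deriv_fun_sub ((hy₁' x).fun_mul (hy₂ x)) ((hy₁ x).fun_mul (hy₂' x)),
        deriv_fun_mul (hy₁' x) (hy₂ x), deriv_fun_mul (hy₁ x) (hy₂' x)]
    ring
  have hMd : ∀ x : ℝ, deriv (fun x => (deriv (deriv y₁) x * y₂ x - y₁ x * deriv (deriv y₂) x)) x = (deriv (deriv (deriv y₁)) x * y₂ x + deriv (deriv y₁) x * deriv y₂ x - (deriv y₁ x * deriv (deriv y₂) x + y₁ x * deriv (deriv (deriv y₂)) x)) := by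
    intro x
    rw [deriv_fun_sub ((hy₁'' x).fun_mul (hy₂ x)) ((hy₁ x).fun_mul (hy₂'' x)),
        deriv_fun_mul (hy₁'' x) (hy₂ x), deriv_fun_mul (hy₁ x) (hy₂'' x)]
  have hDd : ∀ x : ℝ, deriv (fun x => (y₂ x * y₂ x)) x = (deriv y₂ x * y₂ x + y₂ x * deriv y₂ x) := fun x => deriv_mul (hy₂ x) (hy₂ x)
  have hEd : ∀ x : ℝ, deriv (fun x => (deriv y₂ x * y₂ x + y₂ x * deriv y₂ x)) x = (deriv (deriv y₂) x * y₂ x + deriv y₂ x * deriv y₂ x + (deriv y₂ x * deriv y₂ x + y₂ x * deriv (deriv y₂) x)) := by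
    intro x
    rw [deriv_fun_add ((hy₂'.fun_mul hy₂) x) ((hy₂.fun_mul hy₂') x),
        deriv_fun_mul (hy₂' x) (hy₂ x), deriv_fun_mul (hy₂ x) (hy₂' x)]
  have hQd : ∀ x : ℝ, deriv (fun x => ((deriv y₁ x * y₂ x - y₁ x * deriv y₂ x) / (y₂ x * y₂ x))) x = (((deriv (deriv y₁) x * y₂ x - y₁ x * deriv (deriv y₂) x) * (y₂ x * y₂ x) - (deriv y₁ x * y₂ x - y₁ x * deriv y₂ x) * (deriv y₂ x * y₂ x + y₂ x * deriv y₂ x)) / ((y₂ x * y₂ x) * (y₂ x * y₂ x))) := by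
    intro x
    rw [deriv_fun_div (hN x) (hD x) (hy20 x), hNd x, hDd x]
    ring
  have hRd : ∀ x : ℝ, deriv (fun x => (((deriv (deriv y₁) x * y₂ x - y₁ x * deriv (deriv y₂) x) * (y₂ x * y₂ x) - (deriv y₁ x * y₂ x - y₁ x * deriv y₂ x) * (deriv y₂ x * y₂ x + y₂ x * deriv y₂ x)) / ((y₂ x * y₂ x) * (y₂ x * y₂ x)))) x = ((((deriv (deriv (deriv y₁)) x * y₂ x + deriv (deriv y₁) x * deriv y₂ x - (deriv y₁ x * deriv (deriv y₂) x + y₁ x * deriv (deriv (deriv y₂)) x)) * (y₂ x * y₂ x) + (deriv (deriv y₁) x * y₂ x - y₁ x * deriv (deriv y₂) x) * (deriv y₂ x * y₂ x + y₂ x * deriv y₂ x) - ((deriv (deriv y₁) x * y₂ x - y₁ x * deriv (deriv y₂) x) * (deriv y₂ x * y₂ x + y₂ x * deriv y₂ x) + (deriv y₁ x * y₂ x - y₁ x * deriv y₂ x) * (deriv (deriv y₂) x * y₂ x + deriv y₂ x * deriv y₂ x + (deriv y₂ x * deriv y₂ x + y₂ x * deriv (deriv y₂) x)))) * ((y₂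 x * y₂ x) * (y₂ x * y₂ x)) - ((deriv (deriv y₁) x * y₂ x - y₁ x * deriv (deriv y₂) x) * (y₂ x * y₂ x) - (deriv y₁ x * y₂ x - y₁ x * deriv y₂ x) * (deriv y₂ x * y₂ x + y₂ x * deriv y₂ x)) * ((deriv y₂ x * y₂ x + y₂ x * deriv y₂ x) * (y₂ x * y₂ x) + (y₂ x * y₂ x) * (deriv y₂ x * y₂ x + y₂ x * deriv y₂ x))) / (((y₂ x * y₂ x) * (y₂ x * y₂ x)) * ((y₂ x * y₂ x) * (y₂ x * y₂ x)))) := by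
    intro x
    rw [deriv_fun_div (hRnum x) (hRden x) (hRden0 x),
        deriv_fun_sub ((hM.fun_mul hD) x) ((hN.fun_mul hE) x),
        deriv_fun_mul (hM x) (hD x), deriv_fun_mul (hN x) (hE x),
        deriv_fun_mul (hD x) (hD x), hMd x, hNd x, hDd x, hEd x]
    ring
  have hY1e : deriv (fun t => y₂ t * K t) = fun x => (deriv y₂ x * K x + y₂ x * (((deriv y₁ x * y₂ x - y₁ x * deriv y₂ x) / (y₂ x * y₂ x)) * H x)) := by
    funext x
    rw [deriv_fun_mul (hy₂ x) (hK x), hK' x, hwval x]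
  have hY1diff : Differentiable ℝ (fun x => (deriv y₂ x * K x + y₂ x * (((deriv y₁ x * y₂ x - y₁ x * deriv y₂ x) / (y₂ x * y₂ x)) * H x))) := (hy₂'.mul hK).add (hy₂.mul (hQ.mul hH))
  have hY2e : deriv (fun x => (deriv y₂ x * K x + y₂ x * (((deriv y₁ x * y₂ x - y₁ x * deriv y₂ x) / (y₂ x * y₂ x)) * H x))) = fun x => (deriv (deriv y₂) x * K x + (2 * (deriv y₂ x * (((deriv y₁ x * y₂ x - y₁ x * deriv y₂ x) / (y₂ x * y₂ x)) * H x)) + (y₂ x * ((((deriv (deriv y₁) x * y₂ x - y₁ x * deriv (deriv y₂) x) * (y₂ x * y₂ x) - (deriv y₁ x * y₂ x - y₁ x * deriv y₂ x) * (deriv y₂ x * y₂ x + y₂ x * deriv y₂ x)) / ((y₂ x * y₂ x) * (y₂ x * y₂ x))) * H x) + (Real.exp (-A x) * G x / (deriv y₁ x * y₂ x - y₁ x * deriv y₂ x))))) := by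
    funext x
    rw [deriv_fun_add ((hy₂'.fun_mul hK) x) ((hy₂.fun_mul (hQ.fun_mul hH)) x),
        deriv_fun_mul (hy₂' x) (hK x),
        deriv_fun_mul (hy₂ x) ((hQ.fun_mul hH) x),
        deriv_fun_mul (hQ x) (hH x),
        hK' x, hH2 x, hQd x, hwval x]
    have hb := hy₂0 x
    have hn := hN0 x
    field_simp
    ring
  have hY2diff : Differentiable ℝ (fun x => (deriv (deriv y₂) x * K x + (2 * (deriv y₂ x * (((deriv y₁ x * y₂ x - y₁ x * deriv y₂ x) / (y₂ x * y₂ x)) * H x)) + (y₂ x * ((((deriv (deriv y₁) x * y₂ x - y₁ x * deriv (deriv y₂) x) * (y₂ x * y₂ x) - (deriv y₁ x * y₂ x - y₁ x * deriv y₂ x) * (deriv y₂ x * y₂ x + y₂ x * deriv y₂ x)) / ((y₂ x * y₂ x) * (y₂ x * y₂ x))) * H x) + (Real.exp (-A x) * G x / (deriv y₁ x * y₂ x - y₁ x * deriv y₂ x)))))) :=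
    (hy₂''.mul hK).add ((((hy₂'.mul (hQ.mul hH))).const_mul 2).add
      ((hy₂.mul (hR.mul hH)).add ((hExp.mul hG).div hN hN0)))
  refine ⟨⟨hy₂.mul hK, ?_, ?_⟩, ?_⟩
  · rw [hY1e]; exact hY1diff
  · rw [hY1e, hY2e]; exact hY2diff
  · intro x
    rw [hY1e, hY2e]
    have e1 : deriv (deriv (deriv y₁)) x
        = -(b₁ x * deriv (deriv y₁) x + b₂ x * deriv y₁ x + b₃ x * y₁ x) := by
      linarith [hode₁ x]
    have e2 : deriv (deriv (deriv y₂)) x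
        = -(b₁ x * deriv (deriv y₂) x + b₂ x * deriv y₂ x + b₃ x * y₂ x) := by
      linarith [hode₂ x]
    rw [deriv_fun_add ((hy₂''.fun_mul hK) x)
          (((((hy₂'.fun_mul (hQ.fun_mul hH))).const_mul 2).fun_add
            ((hy₂.fun_mul (hR.fun_mul hH)).fun_add ((hExp.fun_mul hG).fun_div hN hN0))) x),
        deriv_fun_mul (hy₂'' x) (hK x),
        deriv_fun_add ((((hy₂'.fun_mul (hQ.fun_mul hH))).const_mul 2) x)
          (((hy₂.fun_mul (hR.fun_mul hH)).fun_add ((hExp.fun_mul hG).fun_div hN hN0)) x),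
        deriv_const_mul (2 : ℝ) ((hy₂'.fun_mul (hQ.fun_mul hH)) x),
        deriv_fun_mul (hy₂' x) ((hQ.fun_mul hH) x),
        deriv_fun_mul (hQ x) (hH x),
        deriv_fun_add ((hy₂.fun_mul (hR.fun_mul hH)) x) (((hExp.fun_mul hG).fun_div hN hN0) x),
        deriv_fun_mul (hy₂ x) ((hR.fun_mul hH) x),
        deriv_fun_mul (hR x) (hH x),
        deriv_fun_div ((hExp.fun_mul hG) x) (hN x) (hN0 x),
        deriv_fun_mul (hExp x) (hG x),
        hExpd x, hNd x, hQd x, hRd x,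
        hK' x, hH2 x, hG' x, hA' x, hwval x, e1, e2, Real.exp_neg]
    simp only [Real.exp_neg]
    have hb := hy₂0 x
    have hn := hN0 x
    have hn' : y₂ x * deriv y₁ x - deriv y₂ x * y₁ x ≠ 0 := by
      rw [mul_comm (y₂ x), mul_comm (deriv y₂ x)]; exact hn
    have he := Real.exp_ne_zero (A x)
    generalize hEe : Real.exp (A x) = E
    rw [hEe] at he
    field_simp
    ring
end

section
/- Suppose α_p(n) : ℝ → ℝ (1 ≤ p ≤ m, n ∈ ℕ) is any family of smooth functions satisfying the recurrences α_p(n+1) = (α_p(n))′ + α_{p+1}(n) + α₁(n)·b_p for 1 ≤ p ≤ m−1 and α_m(n+1) = (α_m(n))′ + α₁(n)·b_m, for all n ∈ ℕ. Then the first coefficient α₁ satisfies the single higher-order recurrence: for every natural number n and every x ∈ ℝ, ∑_{i=0}^{m} (−1)^{i+m} · C(m,i) · (α₁(n+i))^{(m−i)}(x) + ∑_{j=0}^{m} ∑_{i=0}^{m−1−j} (−1)^{j+i+m} · C(m−1−i, j) · (α₁(n+j)·b_{1+i})^{(m−1−i−j)}(x) = 0. -/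
open Finset

private noncomputable def Tpow (k : ℕ) (f : ℕ → ℝ → ℝ) (n : ℕ) (x : ℝ) : ℝ :=
  ∑ j ∈ Finset.range (k + 1),
    (-1 : ℝ) ^ (k + j) * (k.choose j : ℝ) * iteratedDeriv (k - j) (f (n + j)) x

private lemma Tpow_zero (f : ℕ → ℝ → ℝ) (n : ℕ) (x : ℝ) : Tpow 0 f n x = f n x := by
  simp [Tpow]

private lemma neg_one_pow_two_add (a : ℕ) : ((-1 : ℝ)) ^ (a + 2) = (-1 : ℝ) ^ a := by
  rw [pow_add]; norm_num

private lemma Tpow_succ (k : ℕ) (f : ℕ → ℝ → ℝ) (n : ℕ) (x : ℝ) :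
    Tpow (k + 1) f n x = Tpow k f (n + 1) x - Tpow k (fun p => deriv (f p)) n x := by
  unfold Tpow
  rw [Finset.sum_range_succ']
  have hA : ∀ j ∈ Finset.range (k + 1),
      (-1 : ℝ) ^ (k + 1 + (j + 1)) * ((k + 1).choose (j + 1) : ℝ)
          * iteratedDeriv (k + 1 - (j + 1)) (f (n + (j + 1))) x
        = (-1 : ℝ) ^ (k + j) * (k.choose j : ℝ) * iteratedDeriv (k - j) (f (n + 1 + j)) x
          + (-1 : ℝ) ^ (k + j) * (k.choose (j + 1) : ℝ)
              * iteratedDeriv (k - j) (f (n + 1 + j)) x := by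
    intro j _
    have h1 : k + 1 + (j + 1) = (k + j) + 2 := by omega
    have h2 : k + 1 - (j + 1) = k - j := by omega
    have h3 : n + (j + 1) = n + 1 + j := by omega
    rw [h1, h2, h3, neg_one_pow_two_add, Nat.choose_succ_succ]
    push_cast
    ring
  rw [Finset.sum_congr rfl hA, Finset.sum_add_distrib]
  have hB : ∀ j ∈ Finset.range (k + 1),
      (-1 : ℝ) ^ (k + j) * (k.choose j : ℝ)
          * iteratedDeriv (k - j) (deriv (f (n + j))) x
        = (-1 : ℝ) ^ (k + j) * (k.choose j : ℝ)
            * iteratedDeriv (k - j + 1) (f (n + j)) x := by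
    intro j _
    rw [iteratedDeriv_succ']
  rw [Finset.sum_congr rfl hB]
  rw [Finset.sum_range_succ' (fun j => (-1 : ℝ) ^ (k + j) * (k.choose j : ℝ)
      * iteratedDeriv (k - j + 1) (f (n + j)) x)]
  have hC : ∀ j ∈ Finset.range k,
      (-1 : ℝ) ^ (k + (j + 1)) * (k.choose (j + 1) : ℝ)
          * iteratedDeriv (k - (j + 1) + 1) (f (n + (j + 1))) x
        = -((-1 : ℝ) ^ (k + j) * (k.choose (j + 1) : ℝ)
            * iteratedDeriv (k - j) (f (n + 1 + j)) x) := by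
    intro j hj
    rw [Finset.mem_range] at hj
    have h1 : k + (j + 1) = (k + j) + 1 := by omega
    have h2 : k - (j + 1) + 1 = k - j := by omega
    have h3 : n + (j + 1) = n + 1 + j := by omega
    rw [h1, h2, h3, pow_succ]
    ring
  rw [Finset.sum_congr rfl hC]
  rw [show ∑ j ∈ Finset.range (k + 1), (-1 : ℝ) ^ (k + j) * (k.choose (j + 1) : ℝ)
        * iteratedDeriv (k - j) (f (n + 1 + j)) x
      = ∑ j ∈ Finset.range k, (-1 : ℝ) ^ (k + j) * (k.choose (j + 1) : ℝ)
        * iteratedDeriv (k - j) (f (n + 1 + j)) x from by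
    rw [Finset.sum_range_succ, Nat.choose_succ_self]; simp]
  simp only [Finset.sum_neg_distrib]
  have h0 : (-1 : ℝ) ^ (k + 1 + 0) * ((k + 1).choose 0 : ℝ)
      * iteratedDeriv (k + 1 - 0) (f (n + 0)) x
    = -((-1 : ℝ) ^ (k + 0) * (k.choose 0 : ℝ) * iteratedDeriv (k - 0 + 1) (f (n + 0)) x) := by
    simp [pow_succ]
  rw [h0]
  ring

private lemma iterDiff {f : ℝ → ℝ} (hf : ContDiff ℝ (⊤ : ℕ∞) f) (r : ℕ) :
    Differentiable ℝ (iteratedDeriv r f) := by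
  apply hf.differentiable_iteratedDeriv
  exact_mod_cast WithTop.coe_lt_top _

private lemma Tpow_differentiable (k : ℕ) (f : ℕ → ℝ → ℝ)
    (hf : ∀ p, ContDiff ℝ (⊤ : ℕ∞) (f p)) (n : ℕ) :
    Differentiable ℝ (fun y => Tpow k f n y) := by
  unfold Tpow
  apply Differentiable.fun_sum
  intro j _
  exact (iterDiff (hf (n + j)) (k - j)).const_mul _

private lemma Tpow_deriv (k : ℕ) (f : ℕ → ℝ → ℝ)
    (hf : ∀ p, ContDiff ℝ (⊤ : ℕ∞) (f p)) (n : ℕ) (x : ℝ) :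
    deriv (fun y => Tpow k f n y) x = Tpow k (fun p => deriv (f p)) n x := by
  unfold Tpow
  rw [deriv_fun_sum (fun j _ => ((iterDiff (hf (n + j)) (k - j)) x).const_mul _)]
  apply Finset.sum_congr rfl
  intro j _
  rw [deriv_const_mul _ ((iterDiff (hf (n + j)) (k - j)) x)]
  congr 1
  rw [← iteratedDeriv_succ, iteratedDeriv_succ']

private lemma tri_aux (N a : ℕ) (g : ℕ → ℝ) :
    ∑ c ∈ Finset.range (N - a), g c = ∑ c ∈ Finset.range N, if a + c < N then g c else 0 := by
  have h : Finset.range (N - a) = (Finset.range N).filter (fun c => a + c < N) := by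
    ext c; simp only [Finset.mem_filter, Finset.mem_range]; omega
  rw [h, Finset.sum_filter]

private lemma tri_swap (N : ℕ) (f : ℕ → ℕ → ℝ) :
    ∑ j ∈ Finset.range N, ∑ i ∈ Finset.range (N - j), f j i
      = ∑ i ∈ Finset.range N, ∑ j ∈ Finset.range (N - i), f j i := by
  rw [Finset.sum_congr rfl fun j _ => tri_aux N j (f j), Finset.sum_comm]
  refine Finset.sum_congr rfl fun i _ => ?_
  rw [tri_aux N i (fun j => f j i)]
  refine Finset.sum_congr rfl fun j _ => ?_
  exact if_congr (by omega) rfl rfl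
/-- Let `m ≥ 1` and `b₁, …, b_m` be smooth.  If a family of smooth functions `α_p(n)`
(`1 ≤ p ≤ m`, `n ∈ ℕ`) satisfies `α_p(n+1) = (α_p(n))′ + α_{p+1}(n) + α₁(n)·b_p` for
`1 ≤ p ≤ m−1` and `α_m(n+1) = (α_m(n))′ + α₁(n)·b_m`, then the first coefficient satisfies
`∑_{i=0}^{m} (−1)^{i+m}·C(m,i)·(α₁(n+i))^{(m−i)}
 + ∑_{j=0}^{m} ∑_{i=0}^{m−1−j} (−1)^{j+i+m}·C(m−1−i, j)·(α₁(n+j)·b_{1+i})^{(m−1−i−j)} = 0`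
(the inner sum being empty when `j = m`). -/
theorem statement19 (m : ℕ) (hm : 1 ≤ m) (b : ℕ → ℝ → ℝ)
    (hb : ∀ p ∈ Finset.Icc 1 m, ContDiff ℝ (⊤ : ℕ∞) (b p))
    (α : ℕ → ℕ → ℝ → ℝ)
    (hα : ∀ p ∈ Finset.Icc 1 m, ∀ n, ContDiff ℝ (⊤ : ℕ∞) (α p n))
    (hrec : ∀ p, 1 ≤ p → p ≤ m - 1 → ∀ n, ∀ x : ℝ,
      α p (n + 1) x = deriv (α p n) x + α (p + 1) n x + α 1 n x * b p x)
    (hrecm : ∀ n, ∀ x : ℝ, α m (n + 1) x = deriv (α m n) x + α 1 n x * b m x)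
    (n : ℕ) (x : ℝ) :
    (∑ i ∈ Finset.range (m + 1),
        (-1 : ℝ) ^ (i + m) * (m.choose i : ℝ) * iteratedDeriv (m - i) (α 1 (n + i)) x)
      + (∑ j ∈ Finset.range (m + 1), ∑ i ∈ Finset.range (m - j),
          (-1 : ℝ) ^ (j + i + m) * (((m - 1 - i).choose j) : ℝ)
            * iteratedDeriv (m - 1 - i - j) (fun t => α 1 (n + j) t * b (1 + i) t) x)
      = 0 := by
  set G : ℕ → ℕ → ℝ → ℝ := fun i p x => α 1 p x * b (1 + i) x with hG
  have hα1 : ∀ p, ContDiff ℝ (⊤ : ℕ∞) (α 1 p) :=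
    hα 1 (Finset.mem_Icc.mpr ⟨le_refl 1, hm⟩)
  have hGs : ∀ i, i < m → ∀ p, ContDiff ℝ (⊤ : ℕ∞) (G i p) := by
    intro i hi p
    exact (hα1 p).mul (hb (1 + i) (Finset.mem_Icc.mpr ⟨by omega, by omega⟩))
  -- key elimination identity
  have key : ∀ k, k ≤ m - 1 → ∀ n x, Tpow k (α 1) n x
      = α (k + 1) n x + ∑ i ∈ Finset.range k, Tpow (k - 1 - i) (G i) n x := by
    intro k
    induction k with
    | zero => intro _ n x; simp [Tpow_zero]
    | succ k ih =>
      intro hk n x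
      have hk' : k ≤ m - 1 := by omega
      rw [Tpow_succ, ih hk' (n + 1) x]
      have hder : Tpow k (fun p => deriv (α 1 p)) n x
          = deriv (α (k + 1) n) x
            + ∑ i ∈ Finset.range k, Tpow (k - 1 - i) (fun p => deriv (G i p)) n x := by
        rw [← Tpow_deriv _ _ hα1 n x]
        have hfun : (fun y => Tpow k (α 1) n y)
            = fun y => α (k + 1) n y + ∑ i ∈ Finset.range k, Tpow (k - 1 - i) (G i) n y := by
          funext y; exact ih hk' n y
        rw [hfun]
        have hd1 : DifferentiableAt ℝ (α (k + 1) n) x := by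
          have := hα (k + 1) (Finset.mem_Icc.mpr ⟨by omega, by omega⟩) n
          exact (this.differentiable (by simp)).differentiableAt
        have hd2 : DifferentiableAt ℝ
            (fun y => ∑ i ∈ Finset.range k, Tpow (k - 1 - i) (G i) n y) x := by
          apply DifferentiableAt.fun_sum
          intro i hi
          rw [Finset.mem_range] at hi
          exact (Tpow_differentiable _ _ (fun p => hGs i (by omega) p) n x)
        rw [deriv_fun_add hd1 hd2,
          deriv_fun_sum (fun i hi => (Tpow_differentiable _ _
            (fun p => hGs i (by have := Finset.mem_range.mp hi; omega) p) n x)) ]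
        · congr 1
          refine Finset.sum_congr rfl fun i hi => ?_
          rw [Finset.mem_range] at hi
          exact Tpow_deriv _ _ (fun p => hGs i (by omega) p) n x
      rw [hder, hrec (k + 1) (by omega) (by omega) n x]
      have hS : ∑ i ∈ Finset.range k, Tpow (k - 1 - i) (G i) (n + 1) x
            - ∑ i ∈ Finset.range k, Tpow (k - 1 - i) (fun p => deriv (G i p)) n x
          = ∑ i ∈ Finset.range k, Tpow (k - i) (G i) n x := by
        rw [← Finset.sum_sub_distrib]
        refine Finset.sum_congr rfl fun i hi => ?_
        rw [Finset.mem_range] at hi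
        rw [show k - i = (k - 1 - i) + 1 by omega, Tpow_succ]
      have hpeel : ∑ i ∈ Finset.range (k + 1), Tpow (k + 1 - 1 - i) (G i) n x
          = (∑ i ∈ Finset.range k, Tpow (k - i) (G i) n x) + G k n x := by
        rw [Finset.sum_range_succ, show k + 1 - 1 - k = 0 by omega, Tpow_zero]
        simp only [Nat.add_sub_cancel]
      rw [hpeel, show b (k + 1) = b (1 + k) by rw [Nat.add_comm], ← hS]
      simp only [hG]
      ring
  -- final identity
  have final : ∀ n x, Tpow m (α 1) n x
      = ∑ i ∈ Finset.range m, Tpow (m - 1 - i) (G i) n x := by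
    intro n x
    obtain ⟨k, rfl⟩ : ∃ k, m = k + 1 := ⟨m - 1, by omega⟩
    rw [Tpow_succ, key k (by omega) (n + 1) x]
    have hder : Tpow k (fun p => deriv (α 1 p)) n x
        = deriv (α (k + 1) n) x
          + ∑ i ∈ Finset.range k, Tpow (k - 1 - i) (fun p => deriv (G i p)) n x := by
      rw [← Tpow_deriv _ _ hα1 n x]
      have hfun : (fun y => Tpow k (α 1) n y)
          = fun y => α (k + 1) n y + ∑ i ∈ Finset.range k, Tpow (k - 1 - i) (G i) n y := by
        funext y; exact key k (by omega) n y
      rw [hfun]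
      have hd1 : DifferentiableAt ℝ (α (k + 1) n) x := by
        have := hα (k + 1) (Finset.mem_Icc.mpr ⟨by omega, by omega⟩) n
        exact (this.differentiable (by simp)).differentiableAt
      have hd2 : DifferentiableAt ℝ
          (fun y => ∑ i ∈ Finset.range k, Tpow (k - 1 - i) (G i) n y) x := by
        apply DifferentiableAt.fun_sum
        intro i hi
        rw [Finset.mem_range] at hi
        exact (Tpow_differentiable _ _ (fun p => hGs i (by omega) p) n x)
      rw [deriv_fun_add hd1 hd2,
        deriv_fun_sum (fun i hi => (Tpow_differentiable _ _
          (fun p => hGs i (by have := Finset.mem_range.mp hi; omega) p) n x)) ]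
      · congr 1
        refine Finset.sum_congr rfl fun i hi => ?_
        rw [Finset.mem_range] at hi
        exact Tpow_deriv _ _ (fun p => hGs i (by omega) p) n x
    rw [hder, hrecm n x]
    have hS : ∑ i ∈ Finset.range k, Tpow (k - 1 - i) (G i) (n + 1) x
          - ∑ i ∈ Finset.range k, Tpow (k - 1 - i) (fun p => deriv (G i p)) n x
        = ∑ i ∈ Finset.range k, Tpow (k - i) (G i) n x := by
      rw [← Finset.sum_sub_distrib]
      refine Finset.sum_congr rfl fun i hi => ?_
      rw [Finset.mem_range] at hi
      rw [show k - i = (k - 1 - i) + 1 by omega, Tpow_succ]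
    have hpeel : ∑ i ∈ Finset.range (k + 1), Tpow (k + 1 - 1 - i) (G i) n x
        = (∑ i ∈ Finset.range k, Tpow (k - i) (G i) n x) + G k n x := by
      rw [Finset.sum_range_succ, show k + 1 - 1 - k = 0 by omega, Tpow_zero]
      simp only [Nat.add_sub_cancel]
    rw [hpeel, show b (k + 1) = b (1 + k) by rw [Nat.add_comm], ← hS]
    simp only [hG]
    ring
  -- assemble
  have e1 : (∑ i ∈ Finset.range (m + 1),
      (-1 : ℝ) ^ (i + m) * (m.choose i : ℝ) * iteratedDeriv (m - i) (α 1 (n + i)) x)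
      = Tpow m (α 1) n x := by
    unfold Tpow
    refine Finset.sum_congr rfl fun i _ => ?_
    rw [Nat.add_comm i m]
  have e2 : (∑ j ∈ Finset.range (m + 1), ∑ i ∈ Finset.range (m - j),
        (-1 : ℝ) ^ (j + i + m) * (((m - 1 - i).choose j) : ℝ)
          * iteratedDeriv (m - 1 - i - j) (fun t => α 1 (n + j) t * b (1 + i) t) x)
      = - ∑ i ∈ Finset.range m, Tpow (m - 1 - i) (G i) n x := by
    rw [Finset.sum_range_succ]
    simp only [Nat.sub_self, Finset.range_zero, Finset.sum_empty, add_zero]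
    rw [tri_swap m (fun j i => (-1 : ℝ) ^ (j + i + m) * (((m - 1 - i).choose j) : ℝ)
          * iteratedDeriv (m - 1 - i - j) (fun t => α 1 (n + j) t * b (1 + i) t) x)]
    rw [← Finset.sum_neg_distrib]
    refine Finset.sum_congr rfl fun i hi => ?_
    rw [Finset.mem_range] at hi
    unfold Tpow
    rw [← Finset.sum_neg_distrib, show m - 1 - i + 1 = m - i by omega]
    refine Finset.sum_congr rfl fun j hj => ?_
    rw [Finset.mem_range] at hj
    have hsign : ((-1 : ℝ)) ^ (j + i + m) = -((-1 : ℝ) ^ (m - 1 - i + j)) := by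
      rw [show j + i + m = (m - 1 - i + j) + (2 * i + 1) by omega, pow_add]
      rw [pow_succ, pow_mul]
      norm_num
    rw [hsign, hG]
    ring
  rw [e1, e2, final n x]
  ring
end
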